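/- Let h̄ be a graphon of the form h̄(x,y) = Σ_{i=1}^k θ_i ν̄_i(x) ν̄_i(y) for some k ∈ ℕ, where θ_1 > θ_2 ≥ … ≥ θ_k ≥ 0 and {ν̄_1,…,ν̄_k} is an orthonormal set in L^2([0,1]). Then there exists ε > 0 such that for every graphon h with ‖T_{h−h̄}‖ < min(ε, ‖T_h‖), the operator norm ‖T_h‖ satisfies ‖T_h‖ = λ_max( Σ_{n≥0} ‖T_h‖^{−n} F_n(h,h̄) ), where λ_max denotes the largest eigenvalue of a k×k real symmetric matrix, and F_n(h,h̄) is the k×k matrix with (i,j) entry √(θ_i θ_j) ∫_{[0,1]^2} ν̄_i(x) (h−h̄)^n(x,y) ν̄_j(y) dx dy, with g^n the n-fold kernel power of g = h−h̄ (g^0 being the identity, so F_0 has entries √(θ_i θ_j)⟨ν̄_i,ν̄_j⟩). -/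

import Mathlib

open MeasureTheory Real Filter Set Topology

noncomputable section

/-- The unit interval `[0,1]` as a subset of `ℝ`. -/
def UI : Set ℝ := Set.Icc 0 1

/-- A graphon: a symmetric measurable function `[0,1]² → [0,1]`. -/
def IsGraphon (h : ℝ → ℝ → ℝ) : Prop :=
  Measurable (Function.uncurry h) ∧ (∀ x y, h x y = h y x) ∧
    ∀ x ∈ UI, ∀ y ∈ UI, h x y ∈ Set.Icc (0:ℝ) 1

/-- The operator norm of the integral operator `T_h` on `L²([0,1])` associated with a
symmetric bounded kernel `h`, expressed via its quadratic form. -/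
def gOpNorm (h : ℝ → ℝ → ℝ) : ℝ :=
  sSup {t : ℝ | ∃ u : ℝ → ℝ, Measurable u ∧ IntegrableOn (fun x => u x ^ 2) UI ∧
    (∫ x in UI, u x ^ 2) ≤ 1 ∧ t = |∫ x in UI, ∫ y in UI, u x * h x y * u y|}

/-- Relative entropy of Bernoulli(a) with respect to Bernoulli(b), with `0 log 0 = 0`. -/
def relEnt (a b : ℝ) : ℝ :=
  a * Real.log (a / b) + (1 - a) * Real.log ((1 - a) / (1 - b))

/-- The rate function `I_r(h) = ∫∫ R(h(x,y) | r(x,y)) dx dy`. -/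
def Ient (r h : ℝ → ℝ → ℝ) : ℝ := ∫ x in UI, ∫ y in UI, relEnt (h x y) (r x y)

/-- The rate function `ψ_r(β) = inf { I_r(h) : h graphon, ‖T_h‖ = β }`. -/
def psiRate (r : ℝ → ℝ → ℝ) (β : ℝ) : ℝ :=
  sInf {c : ℝ | ∃ h : ℝ → ℝ → ℝ, IsGraphon h ∧ gOpNorm h = β ∧ Ient r h = c}

/-- The `L²([0,1]²)` norm of a kernel. -/
def L2norm2 (f : ℝ → ℝ → ℝ) : ℝ := Real.sqrt (∫ x in UI, ∫ y in UI, f x y ^ 2)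

end

noncomputable section

/-- Kernel powers: kpow g n = g^{n+1}, the (n+1)-fold kernel power of g. -/
def kpow (g : ℝ → ℝ → ℝ) : ℕ → ℝ → ℝ → ℝ
  | 0 => g
  | n + 1 => fun x y => ∫ z in UI, kpow g n x z * g z y

/-- The k×k matrix F_n(h,h̄) with (i,j) entry √(θᵢθⱼ)∫∫ ν̄ᵢ(x)(h−h̄)^n(x,y)ν̄ⱼ(y) dx dy,
with (h−h̄)^0 the identity kernel. -/
def Fmat {k : ℕ} (θ : Fin k → ℝ) (ν : Fin k → ℝ → ℝ) (g : ℝ → ℝ → ℝ) :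
    ℕ → Matrix (Fin k) (Fin k) ℝ
  | 0 => fun i j => Real.sqrt (θ i) * Real.sqrt (θ j) * ∫ x in UI, ν i x * ν j x
  | n + 1 => fun i j => Real.sqrt (θ i) * Real.sqrt (θ j) *
      ∫ x in UI, ∫ y in UI, ν i x * kpow g n x y * ν j y

/-- Largest eigenvalue of a real matrix. -/
def maxEig {k : ℕ} (M : Matrix (Fin k) (Fin k) ℝ) : ℝ :=
  sSup {t : ℝ | ∃ v : Fin k → ℝ, v ≠ 0 ∧ M.mulVec v = t • v}

end

set_option maxHeartbeats 1000000

noncomputable section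
namespace FRX

lemma measUI : MeasurableSet UI := measurableSet_Icc
lemma volUI : volume UI = 1 := by simp [UI]

instance : IsFiniteMeasure (volume.restrict UI) :=
  ⟨by rw [Measure.restrict_apply_univ, volUI]; exact ENNReal.one_lt_top⟩

/-- squared L² norm on UI -/
def N2 (u : ℝ → ℝ) : ℝ := ∫ x in UI, u x ^ 2

/-- admissible function -/
def L2 (u : ℝ → ℝ) : Prop := Measurable u ∧ IntegrableOn (fun x => u x ^ 2) UI

/-- kernel operator -/
def Tk (c : ℝ → ℝ → ℝ) (u : ℝ → ℝ) : ℝ → ℝ := fun x => ∫ y in UI, c x y * u y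

/-- globally bounded symmetric measurable kernel -/
def Ker (c : ℝ → ℝ → ℝ) : Prop :=
  Measurable (Function.uncurry c) ∧ (∀ x y, c x y = c y x) ∧ ∀ x y, |c x y| ≤ 1

lemma N2_nonneg (u : ℝ → ℝ) : 0 ≤ N2 u :=
  integral_nonneg fun x => sq_nonneg _

lemma L2.integrableOn {u : ℝ → ℝ} (hu : L2 u) : IntegrableOn u UI := by
  refine Integrable.mono' (g := fun x => (1 + u x ^ 2)/2) ?_ hu.1.aestronglyMeasurable ?_
  · exact (integrable_const (1:ℝ)).add hu.2 |>.div_const 2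
  · filter_upwards with x
    rw [Real.norm_eq_abs]
    nlinarith [sq_nonneg (1 - |u x|), sq_abs (u x)]

lemma L2.mul_integrableOn {u v : ℝ → ℝ} (hu : L2 u) (hv : L2 v) :
    IntegrableOn (fun x => u x * v x) UI := by
  refine Integrable.mono' (g := fun x => (u x ^ 2 + v x ^ 2)/2) ?_
    (hu.1.mul hv.1).aestronglyMeasurable ?_
  · exact (hu.2.add hv.2).div_const 2
  · filter_upwards with x
    rw [Real.norm_eq_abs, abs_mul]
    nlinarith [sq_nonneg (|u x| - |v x|), sq_abs (u x), sq_abs (v x)]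

lemma L2.zero : L2 (fun _ => (0:ℝ)) := by
  refine ⟨measurable_const, ?_⟩
  simpa using (integrable_const (0:ℝ)).integrableOn (s := UI)

lemma L2.add {u v : ℝ → ℝ} (hu : L2 u) (hv : L2 v) : L2 (fun x => u x + v x) := by
  refine ⟨hu.1.add hv.1, ?_⟩
  have : IntegrableOn (fun x => u x ^ 2 + 2 * (u x * v x) + v x ^ 2) UI :=
    (hu.2.add ((hu.mul_integrableOn hv).const_mul 2)).add hv.2
  exact this.congr_fun (fun x _ => by ring) measUI |>.congr_fun (fun x _ => rfl) measUI

lemma L2.smul {u : ℝ → ℝ} (hu : L2 u) (a : ℝ) : L2 (fun x => a * u x) := by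
  refine ⟨hu.1.const_mul a, ?_⟩
  have : IntegrableOn (fun x => a^2 * u x ^ 2) UI := hu.2.const_mul _
  exact this.congr_fun (fun x _ => by ring) measUI

lemma L2.sub {u v : ℝ → ℝ} (hu : L2 u) (hv : L2 v) : L2 (fun x => u x - v x) := by
  have := hu.add (hv.smul (-1))
  refine ⟨hu.1.sub hv.1, (this.2.congr_fun (fun x _ => by ring) measUI)⟩

lemma L2.abs {u : ℝ → ℝ} (hu : L2 u) : L2 (fun x => |u x|) := by
  refine ⟨hu.1.abs, hu.2.congr_fun (fun x _ => (sq_abs (u x)).symm) measUI⟩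

/-- Cauchy–Schwarz for concrete integrals on UI -/
lemma cauchy_schwarz {u v : ℝ → ℝ} (hu : L2 u) (hv : L2 v) :
    (∫ x in UI, u x * v x) ^ 2 ≤ N2 u * N2 v := by
  rcases eq_or_lt_of_le (N2_nonneg u) with h0 | hpos
  · have hu0 : ∀ᵐ x ∂(volume.restrict UI), u x ^ 2 = 0 := by
      have := (integral_eq_zero_iff_of_nonneg (fun x => sq_nonneg (u x)) hu.2).mp h0.symm
      filter_upwards [this] with x hx using hx
    have hC0 : (∫ x in UI, u x * v x) = 0 := by
      refine integral_eq_zero_of_ae ?_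
      filter_upwards [hu0] with x hx
      have : u x = 0 := by nlinarith [sq_nonneg (u x)]
      simp [this]
    rw [hC0]
    simpa using mul_nonneg (le_of_eq h0) (N2_nonneg v)
  · set A := N2 u with hA
    set C := ∫ x in UI, u x * v x with hC
    have h1 : IntegrableOn (fun x => (C/A)^2 * u x ^2) UI := hu.2.const_mul _
    have h2 : IntegrableOn (fun x => (2*(C/A)) * (u x * v x)) UI :=
      (hu.mul_integrableOn hv).const_mul _
    have h12 : IntegrableOn (fun x => (C/A)^2 * u x ^2 - (2*(C/A)) * (u x * v x)) UI :=
      h1.sub h2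
    have key : 0 ≤ (C/A)^2 * A - 2 * (C/A) * C + N2 v := by
      have h0' : 0 ≤ ∫ x in UI, ((C/A) * u x - v x)^2 := integral_nonneg fun x => sq_nonneg _
      have e : ∫ x in UI, ((C/A) * u x - v x)^2
          = ∫ x in UI, (((C/A)^2 * u x ^2 - (2*(C/A)) * (u x * v x)) + v x ^ 2) := by
        refine integral_congr_ae (.of_forall fun x => by ring)
      rw [e, integral_add h12 hv.2, integral_sub h1 h2, integral_const_mul,
        integral_const_mul] at h0'
      have hAu : (∫ a in UI, u a ^ 2) = A := hA.symm
      have hCu : (∫ a in UI, u a * v a) = C := hC.symm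
      have hNv : (∫ a in UI, v a ^ 2) = N2 v := rfl
      rw [hAu, hCu, hNv] at h0'
      exact h0'
    have hAne : A ≠ 0 := ne_of_gt hpos
    have key2 : 0 ≤ -(C^2/A) + N2 v := by
      have e1 : (C/A)^2 * A = C^2/A := by field_simp
      have e2 : 2*(C/A)*C = 2*(C^2/A) := by field_simp
      rw [e1, e2] at key; linarith
    calc C^2 = (C^2/A) * A := (div_mul_cancel₀ _ hAne).symm
      _ ≤ N2 v * A := mul_le_mul_of_nonneg_right (by linarith) (le_of_lt hpos)
      _ = A * N2 v := mul_comm _ _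

/-! ### Stage 2: kernel operator basics -/

lemma L2.one : L2 (fun _ : ℝ => (1:ℝ)) := by
  refine ⟨measurable_const, ?_⟩
  have : IntegrableOn (fun _ : ℝ => (1:ℝ)) UI :=
    integrableOn_const (by rw [volUI]; exact ENNReal.one_ne_top)
  simpa using this

lemma N2_one : N2 (fun _ : ℝ => (1:ℝ)) = 1 := by
  unfold N2
  simp [measureReal_def, volUI]

lemma integral_abs_le_sqrt_N2 {u : ℝ → ℝ} (hu : L2 u) :
    (∫ x in UI, |u x|) ≤ Real.sqrt (N2 u) := by
  have habs : L2 (fun x => |u x|) := hu.abs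
  have hcs := cauchy_schwarz habs L2.one
  have hN : N2 (fun x => |u x|) = N2 u := by
    unfold N2; exact integral_congr_ae (.of_forall fun x => sq_abs (u x))
  rw [hN, N2_one, mul_one] at hcs
  have h0 : 0 ≤ ∫ x in UI, |u x| := integral_nonneg fun x => abs_nonneg _
  have : (∫ x in UI, |u x| * 1) = ∫ x in UI, |u x| := by simp
  rw [this] at hcs
  nlinarith [Real.sq_sqrt (N2_nonneg u), Real.sqrt_nonneg (N2 u)]

lemma Ker.meas_left {c : ℝ → ℝ → ℝ} (hc : Ker c) (x : ℝ) : Measurable (fun y => c x y) :=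
  hc.1.comp measurable_prodMk_left

lemma Ker.integrableOn_mul {c : ℝ → ℝ → ℝ} (hc : Ker c) {u : ℝ → ℝ} (hu : L2 u) (x : ℝ) :
    IntegrableOn (fun y => c x y * u y) UI := by
  refine Integrable.mono' (g := fun y => |u y|) ?_
    ((hc.meas_left x).mul hu.1).aestronglyMeasurable ?_
  · exact hu.integrableOn.abs
  · filter_upwards with y
    rw [Real.norm_eq_abs, abs_mul]
    exact mul_le_of_le_one_left (abs_nonneg _) (hc.2.2 x y)

lemma Ker.measurable_Tk {c : ℝ → ℝ → ℝ} (hc : Ker c) {u : ℝ → ℝ} (hu : L2 u) :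
    Measurable (Tk c u) := by
  have : StronglyMeasurable (fun p : ℝ × ℝ => c p.1 p.2 * u p.2) :=
    (hc.1.mul (hu.1.comp measurable_snd)).stronglyMeasurable
  exact this.integral_prod_right'.measurable

lemma Ker.Tk_abs_le {c : ℝ → ℝ → ℝ} (hc : Ker c) {u : ℝ → ℝ} (hu : L2 u) (x : ℝ) :
    |Tk c u x| ≤ Real.sqrt (N2 u) := by
  have h1 : |Tk c u x| ≤ ∫ y in UI, |c x y * u y| := by
    have := norm_integral_le_integral_norm (μ := volume.restrict UI) (fun y => c x y * u y)
    simpa only [Real.norm_eq_abs, Tk] using this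
  have h2 : (∫ y in UI, |c x y * u y|) ≤ ∫ y in UI, |u y| := by
    refine integral_mono_ae ((hc.integrableOn_mul hu x).abs) hu.integrableOn.abs ?_
    filter_upwards with y
    rw [abs_mul]
    exact mul_le_of_le_one_left (abs_nonneg _) (hc.2.2 x y)
  exact le_trans h1 (le_trans h2 (integral_abs_le_sqrt_N2 hu))

lemma Ker.Tk_L2 {c : ℝ → ℝ → ℝ} (hc : Ker c) {u : ℝ → ℝ} (hu : L2 u) : L2 (Tk c u) := by
  refine ⟨hc.measurable_Tk hu, ?_⟩
  refine Integrable.mono' (g := fun _ => N2 u) (integrable_const _)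
    ((hc.measurable_Tk hu).pow_const 2).aestronglyMeasurable ?_
  filter_upwards with x
  rw [Real.norm_eq_abs, abs_pow]
  calc |Tk c u x| ^ 2 ≤ Real.sqrt (N2 u) ^ 2 := by
        have := hc.Tk_abs_le hu x
        nlinarith [abs_nonneg (Tk c u x)]
    _ = N2 u := Real.sq_sqrt (N2_nonneg u)

lemma Tk_add {c : ℝ → ℝ → ℝ} (hc : Ker c) {u v : ℝ → ℝ} (hu : L2 u) (hv : L2 v) (x : ℝ) :
    Tk c (fun y => u y + v y) x = Tk c u x + Tk c v x := by
  unfold Tk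
  rw [← integral_add (hc.integrableOn_mul hu x) (hc.integrableOn_mul hv x)]
  exact integral_congr_ae (.of_forall fun y => by ring)

lemma Tk_smul (c : ℝ → ℝ → ℝ) (a : ℝ) (u : ℝ → ℝ) (x : ℝ) :
    Tk c (fun y => a * u y) x = a * Tk c u x := by
  unfold Tk
  rw [← integral_const_mul]
  exact integral_congr_ae (.of_forall fun y => by ring)

lemma Tk_sub {c : ℝ → ℝ → ℝ} (hc : Ker c) {u v : ℝ → ℝ} (hu : L2 u) (hv : L2 v) (x : ℝ) :
    Tk c (fun y => u y - v y) x = Tk c u x - Tk c v x := by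
  have h1 := Tk_add hc hu (hv.smul (-1)) x
  have h2 := Tk_smul c (-1) v x
  have e : (fun y => u y + (-1) * v y) = (fun y => u y - v y) := by funext y; ring
  rw [e] at h1
  rw [h1, h2]; ring

lemma Tk_zero_of_ae {c : ℝ → ℝ → ℝ} {u : ℝ → ℝ}
    (h : ∀ᵐ y ∂(volume.restrict UI), u y = 0) (x : ℝ) : Tk c u x = 0 := by
  unfold Tk
  refine integral_eq_zero_of_ae ?_
  filter_upwards [h] with y hy
  simp [hy]

lemma N2_eq_zero_ae {u : ℝ → ℝ} (hu : L2 u) (h : N2 u = 0) :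
    ∀ᵐ x ∂(volume.restrict UI), u x = 0 := by
  have := (integral_eq_zero_iff_of_nonneg (fun x => sq_nonneg (u x)) hu.2).mp h
  filter_upwards [this] with x hx
  have : u x ^ 2 = 0 := hx
  nlinarith [sq_nonneg (u x)]

/-- the bilinear form -/
def B (c : ℝ → ℝ → ℝ) (u v : ℝ → ℝ) : ℝ := ∫ x in UI, u x * Tk c v x

lemma iter_eq_B (c : ℝ → ℝ → ℝ) (u v : ℝ → ℝ) :
    (∫ x in UI, ∫ y in UI, u x * c x y * v y) = B c u v := by
  unfold B Tk
  refine integral_congr_ae (.of_forall fun x => ?_)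
  show (∫ y in UI, u x * c x y * v y) = u x * ∫ y in UI, c x y * v y
  rw [← integral_const_mul]
  exact integral_congr_ae (.of_forall fun y => by ring)

lemma iterint_congr {c c' : ℝ → ℝ → ℝ} (u : ℝ → ℝ)
    (hcc : ∀ x ∈ UI, ∀ y ∈ UI, c x y = c' x y) :
    (∫ x in UI, ∫ y in UI, u x * c x y * u y)
      = ∫ x in UI, ∫ y in UI, u x * c' x y * u y := by
  refine setIntegral_congr_fun measUI (fun x hx => ?_)
  refine setIntegral_congr_fun measUI (fun y hy => ?_)
  rw [hcc x hx y hy]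

lemma gOpNorm_congr {c c' : ℝ → ℝ → ℝ} (hcc : ∀ x ∈ UI, ∀ y ∈ UI, c x y = c' x y) :
    gOpNorm c = gOpNorm c' := by
  unfold gOpNorm
  congr 1
  ext t
  constructor
  · rintro ⟨u, h1, h2, h3, h4⟩
    exact ⟨u, h1, h2, h3, by rw [h4, iterint_congr u hcc]⟩
  · rintro ⟨u, h1, h2, h3, h4⟩
    exact ⟨u, h1, h2, h3, by rw [h4, ← iterint_congr u hcc]⟩

/-! ### Stage 3: gOpNorm facts -/

lemma gOpNorm_def (c : ℝ → ℝ → ℝ) : gOpNorm c =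
    sSup {t : ℝ | ∃ u : ℝ → ℝ, Measurable u ∧ IntegrableOn (fun x => u x ^ 2) UI ∧
      (∫ x in UI, u x ^ 2) ≤ 1 ∧ t = |∫ x in UI, ∫ y in UI, u x * c x y * u y|} := rfl

lemma N2_smul (a : ℝ) (u : ℝ → ℝ) : N2 (fun x => a * u x) = a^2 * N2 u := by
  unfold N2
  rw [← integral_const_mul]
  exact integral_congr_ae (.of_forall fun x => by ring)

lemma iter_smul (c : ℝ → ℝ → ℝ) (u : ℝ → ℝ) (a : ℝ) :
    (∫ x in UI, ∫ y in UI, (a * u x) * c x y * (a * u y))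
      = a^2 * ∫ x in UI, ∫ y in UI, u x * c x y * u y := by
  rw [← integral_const_mul]
  refine integral_congr_ae (.of_forall fun x => ?_)
  show (∫ y in UI, (a * u x) * c x y * (a * u y)) = a ^ 2 * ∫ y in UI, u x * c x y * u y
  rw [← integral_const_mul]
  exact integral_congr_ae (.of_forall fun y => by ring)

lemma zero_mem_gset (c : ℝ → ℝ → ℝ) :
    (0:ℝ) ∈ {t : ℝ | ∃ u : ℝ → ℝ, Measurable u ∧ IntegrableOn (fun x => u x ^ 2) UI ∧
      (∫ x in UI, u x ^ 2) ≤ 1 ∧ t = |∫ x in UI, ∫ y in UI, u x * c x y * u y|} := by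
  refine ⟨fun _ => 0, measurable_const, ?_, ?_, ?_⟩ <;> simp

/-- boundedness of the quadratic form set for kernels bounded by 1 on UI² -/
lemma gset_le_one {c : ℝ → ℝ → ℝ} (hc : Measurable (Function.uncurry c))
    (hbd : ∀ x ∈ UI, ∀ y ∈ UI, |c x y| ≤ 1) :
    ∀ t ∈ {t : ℝ | ∃ u : ℝ → ℝ, Measurable u ∧ IntegrableOn (fun x => u x ^ 2) UI ∧
      (∫ x in UI, u x ^ 2) ≤ 1 ∧ t = |∫ x in UI, ∫ y in UI, u x * c x y * u y|}, t ≤ 1 := by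
  rintro t ⟨u, hum, hui, hN, ht⟩
  have hu : L2 u := ⟨hum, hui⟩
  set I := ∫ y in UI, |u y| with hI
  have hI0 : 0 ≤ I := integral_nonneg fun y => abs_nonneg _
  set F := fun x => ∫ y in UI, u x * c x y * u y with hF
  have hFmeas : Measurable F := by
    have : StronglyMeasurable (fun p : ℝ × ℝ => u p.1 * c p.1 p.2 * u p.2) :=
      (((hum.comp measurable_fst).mul hc).mul (hum.comp measurable_snd)).stronglyMeasurable
    exact this.integral_prod_right'.measurable
  have hFb : ∀ x ∈ UI, |F x| ≤ |u x| * I := by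
    intro x hx
    have hmy : Measurable (fun y => u x * c x y * u y) :=
      ((measurable_const.mul (hc.comp measurable_prodMk_left)).mul hum)
    have hint : IntegrableOn (fun y => |u x * c x y * u y|) UI := by
      refine (Integrable.mono' (g := fun y => |u x| * |u y|)
        ((hu.integrableOn.abs.const_mul _)) hmy.abs.aestronglyMeasurable ?_)
      rw [ae_restrict_iff' measUI]
      filter_upwards with y hy
      rw [Real.norm_eq_abs, abs_abs, abs_mul, abs_mul]
      have := hbd x hx y hy
      calc |u x| * |c x y| * |u y| = |c x y| * (|u x| * |u y|) := by ring
        _ ≤ 1 * (|u x| * |u y|) := mul_le_mul_of_nonneg_right this (by positivity)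
        _ = |u x| * |u y| := one_mul _
    have h1 : |F x| ≤ ∫ y in UI, |u x * c x y * u y| := by
      have := norm_integral_le_integral_norm (μ := volume.restrict UI)
        (fun y => u x * c x y * u y)
      simpa only [Real.norm_eq_abs] using this
    have h2 : (∫ y in UI, |u x * c x y * u y|) ≤ ∫ y in UI, |u x| * |u y| := by
      refine integral_mono_ae hint (hu.integrableOn.abs.const_mul _) ?_
      rw [EventuallyLE, ae_restrict_iff' measUI]
      filter_upwards with y hy
      rw [abs_mul, abs_mul]
      have := hbd x hx y hy
      calc |u x| * |c x y| * |u y| = |c x y| * (|u x| * |u y|) := by ring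
        _ ≤ 1 * (|u x| * |u y|) := mul_le_mul_of_nonneg_right this (by positivity)
        _ = |u x| * |u y| := one_mul _
    rw [integral_const_mul] at h2
    exact le_trans h1 (le_trans h2 (le_refl _))
  have hFint : IntegrableOn F UI := by
    refine Integrable.mono' (g := fun x => |u x| * I)
      (hu.integrableOn.abs.mul_const I) hFmeas.aestronglyMeasurable ?_
    rw [ae_restrict_iff' measUI]
    filter_upwards with x hx
    exact (Real.norm_eq_abs _) ▸ hFb x hx
  have step1 : |∫ x in UI, F x| ≤ ∫ x in UI, |F x| := by
    have := norm_integral_le_integral_norm (μ := volume.restrict UI) F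
    simpa only [Real.norm_eq_abs] using this
  have step2 : (∫ x in UI, |F x|) ≤ ∫ x in UI, |u x| * I := by
    refine setIntegral_mono_on hFint.abs (hu.integrableOn.abs.mul_const I) measUI ?_
    intro x hx; exact hFb x hx
  have step3 : (∫ x in UI, |u x| * I) = I * I := by
    rw [integral_mul_const]
  have hIle : I ≤ Real.sqrt (N2 u) := integral_abs_le_sqrt_N2 hu
  have hNle : N2 u ≤ 1 := hN
  have : I * I ≤ 1 := by
    nlinarith [Real.sq_sqrt (N2_nonneg u), Real.sqrt_nonneg (N2 u)]
  rw [ht]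
  calc |∫ x in UI, F x| ≤ ∫ x in UI, |F x| := step1
    _ ≤ ∫ x in UI, |u x| * I := step2
    _ = I * I := step3
    _ ≤ 1 := this

lemma gOpNorm_bddAbove {c : ℝ → ℝ → ℝ} (hc : Measurable (Function.uncurry c))
    (hbd : ∀ x ∈ UI, ∀ y ∈ UI, |c x y| ≤ 1) :
    BddAbove {t : ℝ | ∃ u : ℝ → ℝ, Measurable u ∧ IntegrableOn (fun x => u x ^ 2) UI ∧
      (∫ x in UI, u x ^ 2) ≤ 1 ∧ t = |∫ x in UI, ∫ y in UI, u x * c x y * u y|} :=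
  ⟨1, fun t ht => gset_le_one hc hbd t ht⟩

lemma gOpNorm_nonneg {c : ℝ → ℝ → ℝ} (hc : Measurable (Function.uncurry c))
    (hbd : ∀ x ∈ UI, ∀ y ∈ UI, |c x y| ≤ 1) : 0 ≤ gOpNorm c :=
  le_csSup (gOpNorm_bddAbove hc hbd) (zero_mem_gset c)

lemma gOpNorm_le_one {c : ℝ → ℝ → ℝ} (hc : Measurable (Function.uncurry c))
    (hbd : ∀ x ∈ UI, ∀ y ∈ UI, |c x y| ≤ 1) : gOpNorm c ≤ 1 :=
  csSup_le ⟨0, zero_mem_gset c⟩ (gset_le_one hc hbd)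

/-- the fundamental quadratic form bound -/
lemma abs_iter_le {c : ℝ → ℝ → ℝ} (hc : Measurable (Function.uncurry c))
    (hbd : ∀ x ∈ UI, ∀ y ∈ UI, |c x y| ≤ 1) {u : ℝ → ℝ} (hu : L2 u) :
    |∫ x in UI, ∫ y in UI, u x * c x y * u y| ≤ gOpNorm c * N2 u := by
  rcases eq_or_lt_of_le (N2_nonneg u) with h0 | hpos
  · have hu0 := N2_eq_zero_ae hu h0.symm
    have : (∫ x in UI, ∫ y in UI, u x * c x y * u y) = 0 := by
      refine integral_eq_zero_of_ae ?_
      filter_upwards [hu0] with x hx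
      have : (fun y => u x * c x y * u y) = fun y => 0 * (c x y * u y) := by
        funext y; rw [hx]; ring
      simp [this]
    rw [this]
    simp [mul_nonneg (gOpNorm_nonneg hc hbd) (N2_nonneg u)]
  · set s := N2 u with hs
    set a := (Real.sqrt s)⁻¹ with ha
    have hsq : Real.sqrt s > 0 := Real.sqrt_pos.mpr hpos
    have ha2 : a^2 = s⁻¹ := by
      rw [ha, inv_pow, Real.sq_sqrt (le_of_lt hpos)]
    have hu' : L2 (fun x => a * u x) := hu.smul a
    have hN' : N2 (fun x => a * u x) = 1 := by
      rw [N2_smul, ha2, ← hs]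
      field_simp
    have hmem : |∫ x in UI, ∫ y in UI, (a * u x) * c x y * (a * u y)|
        ∈ {t : ℝ | ∃ u : ℝ → ℝ, Measurable u ∧ IntegrableOn (fun x => u x ^ 2) UI ∧
          (∫ x in UI, u x ^ 2) ≤ 1 ∧ t = |∫ x in UI, ∫ y in UI, u x * c x y * u y|} :=
      ⟨fun x => a * u x, hu'.1, hu'.2, le_of_eq hN', rfl⟩
    have hle : |∫ x in UI, ∫ y in UI, (a * u x) * c x y * (a * u y)| ≤ gOpNorm c :=
      le_csSup (gOpNorm_bddAbove hc hbd) hmem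
    rw [iter_smul, abs_mul, ha2, abs_of_nonneg (inv_nonneg.mpr (le_of_lt hpos))] at hle
    have := mul_le_mul_of_nonneg_right hle (le_of_lt hpos)
    calc |∫ x in UI, ∫ y in UI, u x * c x y * u y|
        = s⁻¹ * |∫ x in UI, ∫ y in UI, u x * c x y * u y| * s := by
          field_simp
      _ ≤ gOpNorm c * s := this
      _ = gOpNorm c * N2 u := by rw [← hs]

/-! ### Stage 4: bilinear form, polarization, operator norm bound -/

lemma Ker.bdUI {c : ℝ → ℝ → ℝ} (hc : Ker c) : ∀ x ∈ UI, ∀ y ∈ UI, |c x y| ≤ 1 :=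
  fun x _ y _ => hc.2.2 x y

lemma Ker.prod_integrable {c : ℝ → ℝ → ℝ} (hc : Ker c) {u v : ℝ → ℝ}
    (hu : L2 u) (hv : L2 v) :
    Integrable (Function.uncurry (fun x y => u x * c x y * v y))
      ((volume.restrict UI).prod (volume.restrict UI)) := by
  have hmeas : AEStronglyMeasurable (Function.uncurry (fun x y => u x * c x y * v y))
      ((volume.restrict UI).prod (volume.restrict UI)) := by
    have : Measurable (Function.uncurry (fun x y => u x * c x y * v y)) :=
      ((hu.1.comp measurable_fst).mul hc.1).mul (hv.1.comp measurable_snd)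
    exact this.aestronglyMeasurable
  refine Integrable.mono' (g := fun p => |u p.1| * |v p.2|) ?_ hmeas ?_
  · exact hu.integrableOn.abs.mul_prod hv.integrableOn.abs
  · filter_upwards with p
    rw [Real.norm_eq_abs]
    show |u p.1 * c p.1 p.2 * v p.2| ≤ _
    rw [abs_mul, abs_mul]
    calc |u p.1| * |c p.1 p.2| * |v p.2| = |c p.1 p.2| * (|u p.1| * |v p.2|) := by ring
      _ ≤ 1 * (|u p.1| * |v p.2|) := mul_le_mul_of_nonneg_right (hc.2.2 _ _) (by positivity)
      _ = |u p.1| * |v p.2| := one_mul _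

lemma B_symm {c : ℝ → ℝ → ℝ} (hc : Ker c) {u v : ℝ → ℝ} (hu : L2 u) (hv : L2 v) :
    B c u v = B c v u := by
  rw [← iter_eq_B c u v, ← iter_eq_B c v u]
  rw [integral_integral_swap (hc.prod_integrable hu hv)]
  refine integral_congr_ae (.of_forall fun y => ?_)
  refine integral_congr_ae (.of_forall fun x => ?_)
  show u x * c x y * v y = v y * c y x * u x
  rw [hc.2.1 x y]; ring

lemma B_add_right {c : ℝ → ℝ → ℝ} (hc : Ker c) {u v w : ℝ → ℝ}
    (hu : L2 u) (hv : L2 v) (hw : L2 w) :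
    B c u (fun y => v y + w y) = B c u v + B c u w := by
  unfold B
  have e : ∀ x, u x * Tk c (fun y => v y + w y) x = u x * Tk c v x + u x * Tk c w x := by
    intro x
    rw [Tk_add hc hv hw x]; ring
  rw [integral_congr_ae (.of_forall e),
    integral_add (hu.mul_integrableOn (hc.Tk_L2 hv)) (hu.mul_integrableOn (hc.Tk_L2 hw))]

lemma B_smul_left (c : ℝ → ℝ → ℝ) (a : ℝ) (u v : ℝ → ℝ) :
    B c (fun x => a * u x) v = a * B c u v := by
  unfold B
  rw [← integral_const_mul]
  exact integral_congr_ae (.of_forall fun x => by ring)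

lemma B_self_eq_iter (c : ℝ → ℝ → ℝ) (u : ℝ → ℝ) :
    B c u u = ∫ x in UI, ∫ y in UI, u x * c x y * u y := (iter_eq_B c u u).symm

lemma abs_B_self_le {c : ℝ → ℝ → ℝ} (hc : Ker c) {u : ℝ → ℝ} (hu : L2 u) :
    |B c u u| ≤ gOpNorm c * N2 u := by
  rw [B_self_eq_iter]
  exact abs_iter_le hc.1 hc.bdUI hu

lemma N2_parallelogram {u v : ℝ → ℝ} (hu : L2 u) (hv : L2 v) :
    N2 (fun x => u x + v x) + N2 (fun x => u x - v x) = 2 * N2 u + 2 * N2 v := by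
  unfold N2
  rw [← integral_add (hu.add hv).2 (hu.sub hv).2]
  have : (∫ x in UI, ((u x + v x)^2 + (u x - v x)^2))
      = ∫ x in UI, (2 * u x ^ 2 + 2 * v x ^ 2) := by
    exact integral_congr_ae (.of_forall fun x => by ring)
  rw [this, integral_add (hu.2.const_mul 2) (hv.2.const_mul 2),
    integral_const_mul, integral_const_mul]

/-- polarization bound -/
lemma abs_B_le {c : ℝ → ℝ → ℝ} (hc : Ker c) {u v : ℝ → ℝ} (hu : L2 u) (hv : L2 v) :
    |B c u v| ≤ gOpNorm c / 2 * (N2 u + N2 v) := by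
  have h4 : 4 * B c u v = B c (fun x => u x + v x) (fun x => u x + v x)
      - B c (fun x => u x - v x) (fun x => u x - v x) := by
    have e1 : B c (fun x => u x + v x) (fun x => u x + v x)
        = B c (fun x => u x + v x) u + B c (fun x => u x + v x) v := by
      exact B_add_right hc (hu.add hv) hu hv
    have e1' : B c (fun x => u x + v x) u = B c u u + B c v u := by
      rw [B_symm hc (hu.add hv) hu, B_add_right hc hu hu hv,
        B_symm hc hu hu, B_symm hc hu hv]
    have e1'' : B c (fun x => u x + v x) v = B c u v + B c v v := by
      rw [B_symm hc (hu.add hv) hv, B_add_right hc hv hu hv,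
        B_symm hc hv hu, B_symm hc hv hv]
    have hv' : L2 (fun x => (-1) * v x) := hv.smul (-1)
    have esub : (fun x => u x - v x) = (fun x => u x + (-1) * v x) := by
      funext x; ring
    have e2 : B c (fun x => u x - v x) (fun x => u x - v x)
        = B c u u - B c v u - B c u v + B c v v := by
      rw [esub]
      have f1 : B c (fun x => u x + (-1) * v x) (fun x => u x + (-1) * v x)
          = B c (fun x => u x + (-1) * v x) u + B c (fun x => u x + (-1) * v x) (fun x => (-1) * v x) :=
        B_add_right hc (hu.add hv') hu hv'
      have f2 : B c (fun x => u x + (-1) * v x) u = B c u u + (-1) * B c v u := by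
        rw [B_symm hc (hu.add hv') hu, B_add_right hc hu hu hv', B_symm hc hu hu]
        congr 1
        rw [B_symm hc hu hv', B_smul_left]
      have f3 : B c (fun x => u x + (-1) * v x) (fun y => (-1) * v y)
          = (-1) * (B c u v + (-1) * B c v v) := by
        rw [B_symm hc (hu.add hv') hv', B_smul_left]
        congr 1
        rw [B_add_right hc hv hu hv', B_symm hc hv hu]
        congr 1
        rw [B_symm hc hv hv', B_smul_left, B_symm hc hv hv]
      rw [f1, f2, f3]; ring
    rw [e1, e1', e1'', e2]
    have hBsym := B_symm hc hu hv
    ring_nf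
    linarith [hBsym]
  have b1 : |B c (fun x => u x + v x) (fun x => u x + v x)|
      ≤ gOpNorm c * N2 (fun x => u x + v x) := abs_B_self_le hc (hu.add hv)
  have b2 : |B c (fun x => u x - v x) (fun x => u x - v x)|
      ≤ gOpNorm c * N2 (fun x => u x - v x) := abs_B_self_le hc (hu.sub hv)
  have hpar := N2_parallelogram hu hv
  have habs : |4 * B c u v| ≤ gOpNorm c * N2 (fun x => u x + v x)
      + gOpNorm c * N2 (fun x => u x - v x) := by
    rw [h4]
    exact le_trans (abs_sub _ _) (add_le_add b1 b2)
  rw [abs_mul, abs_of_nonneg (by norm_num : (0:ℝ) ≤ 4)] at habs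
  have : gOpNorm c * N2 (fun x => u x + v x) + gOpNorm c * N2 (fun x => u x - v x)
      = gOpNorm c * (2 * N2 u + 2 * N2 v) := by
    rw [← mul_add, hpar]
  rw [this] at habs
  linarith

/-- operator norm bound: N2 (Tk c u) ≤ γ² N2 u -/
lemma N2_Tk_le {c : ℝ → ℝ → ℝ} (hc : Ker c) {u : ℝ → ℝ} (hu : L2 u) :
    N2 (Tk c u) ≤ (gOpNorm c)^2 * N2 u := by
  set γ := gOpNorm c with hγ
  have hγ0 : 0 ≤ γ := gOpNorm_nonneg hc.1 hc.bdUI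
  set P := N2 (Tk c u) with hP
  set N := N2 u with hN
  have hP0 : 0 ≤ P := N2_nonneg _
  have hN0 : 0 ≤ N := N2_nonneg _
  have hPB : B c (Tk c u) u = P := by
    rw [hP]
    unfold B N2
    refine integral_congr_ae (.of_forall fun x => ?_)
    show Tk c u x * Tk c u x = Tk c u x ^ 2
    ring
  rcases eq_or_lt_of_le hP0 with h0 | hPpos
  · rw [← h0]; positivity
  rcases eq_or_lt_of_le hN0 with h0 | hNpos
  · exfalso
    have hu0 := N2_eq_zero_ae hu h0.symm
    have : ∀ x, Tk c u x = 0 := Tk_zero_of_ae hu0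
    have : P = 0 := by
      rw [hP]
      unfold N2
      refine integral_eq_zero_of_ae (.of_forall fun x => ?_)
      show Tk c u x ^ 2 = 0
      rw [this x]; ring
    linarith
  · set t := Real.sqrt N / Real.sqrt P with htdef
    have hsP : Real.sqrt P > 0 := Real.sqrt_pos.mpr hPpos
    have hsN : Real.sqrt N > 0 := Real.sqrt_pos.mpr hNpos
    have ht0 : 0 < t := div_pos hsN hsP
    have hsmul : B c (fun x => t * Tk c u x) u = t * P := by
      rw [B_smul_left, hPB]
    have hb := abs_B_le hc ((hc.Tk_L2 hu).smul t) hu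
    rw [hsmul, N2_smul] at hb
    have ht2P : t^2 * P = N := by
      rw [htdef]
      rw [div_pow, Real.sq_sqrt (le_of_lt hNpos), Real.sq_sqrt (le_of_lt hPpos)]
      field_simp
    rw [← hP, ← hN, ht2P] at hb
    have htP : |t * P| = t * P := abs_of_nonneg (by positivity)
    rw [htP] at hb
    -- t * P ≤ γ/2 * (N + N) = γ N, and t * P = √N √P
    have hdivsqrt : P / Real.sqrt P = Real.sqrt P := Real.div_sqrt
    have htPval : t * P = Real.sqrt N * Real.sqrt P := by
      calc t * P = Real.sqrt N * (P / Real.sqrt P) := by rw [htdef]; ring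
        _ = Real.sqrt N * Real.sqrt P := by rw [hdivsqrt]
    rw [htPval] at hb
    have hb2 : Real.sqrt N * Real.sqrt P ≤ γ * N := by linarith
    have hsq : (Real.sqrt N * Real.sqrt P)^2 ≤ (γ * N)^2 := by
      have h0 : 0 ≤ Real.sqrt N * Real.sqrt P := by positivity
      nlinarith [hb2]
    have hNP : N * P ≤ γ^2 * N^2 := by
      have e : (Real.sqrt N * Real.sqrt P)^2 = N * P := by
        rw [mul_pow, Real.sq_sqrt (le_of_lt hNpos), Real.sq_sqrt (le_of_lt hPpos)]
      nlinarith [hsq]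
    by_contra hcon
    push_neg at hcon
    have := mul_lt_mul_of_pos_left hcon hNpos
    nlinarith [hNP]

/-! ### Stage 5: iterates and resolvent series -/

def Tpow (c : ℝ → ℝ → ℝ) : ℕ → (ℝ → ℝ) → (ℝ → ℝ)
  | 0 => fun u => u
  | n+1 => fun u => Tk c (Tpow c n u)

lemma Tpow_L2 {c : ℝ → ℝ → ℝ} (hc : Ker c) {u : ℝ → ℝ} (hu : L2 u) :
    ∀ n, L2 (Tpow c n u)
  | 0 => hu
  | n+1 => hc.Tk_L2 (Tpow_L2 hc hu n)

lemma N2_Tpow_le {c : ℝ → ℝ → ℝ} (hc : Ker c) {u : ℝ → ℝ} (hu : L2 u) :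
    ∀ n, N2 (Tpow c n u) ≤ (gOpNorm c ^ n)^2 * N2 u := by
  intro n
  induction n with
  | zero => simp [Tpow]
  | succ n ih =>
    have h1 : N2 (Tpow c (n+1) u) ≤ (gOpNorm c)^2 * N2 (Tpow c n u) :=
      N2_Tk_le hc (Tpow_L2 hc hu n)
    have hγ0 : 0 ≤ gOpNorm c := gOpNorm_nonneg hc.1 hc.bdUI
    calc N2 (Tpow c (n+1) u) ≤ (gOpNorm c)^2 * N2 (Tpow c n u) := h1
      _ ≤ (gOpNorm c)^2 * ((gOpNorm c ^ n)^2 * N2 u) := by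
          exact mul_le_mul_of_nonneg_left ih (by positivity)
      _ = (gOpNorm c ^ (n+1))^2 * N2 u := by ring

lemma sqrt_N2_Tpow_le {c : ℝ → ℝ → ℝ} (hc : Ker c) {u : ℝ → ℝ} (hu : L2 u) (n : ℕ) :
    Real.sqrt (N2 (Tpow c n u)) ≤ gOpNorm c ^ n * Real.sqrt (N2 u) := by
  have hγ0 : 0 ≤ gOpNorm c := gOpNorm_nonneg hc.1 hc.bdUI
  have h := N2_Tpow_le hc hu n
  calc Real.sqrt (N2 (Tpow c n u)) ≤ Real.sqrt ((gOpNorm c ^ n)^2 * N2 u) :=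
        Real.sqrt_le_sqrt h
    _ = gOpNorm c ^ n * Real.sqrt (N2 u) := by
        rw [Real.sqrt_mul (by positivity), Real.sqrt_sq (by positivity)]

lemma integral_abs_Tpow_le {c : ℝ → ℝ → ℝ} (hc : Ker c) {u : ℝ → ℝ} (hu : L2 u) (n : ℕ) :
    (∫ x in UI, |Tpow c n u x|) ≤ gOpNorm c ^ n * Real.sqrt (N2 u) :=
  le_trans (integral_abs_le_sqrt_N2 (Tpow_L2 hc hu n)) (sqrt_N2_Tpow_le hc hu n)

lemma Tpow_abs_le {c : ℝ → ℝ → ℝ} (hc : Ker c) {u : ℝ → ℝ} (hu : L2 u) (n : ℕ) (x : ℝ) :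
    |Tpow c (n+1) u x| ≤ gOpNorm c ^ n * Real.sqrt (N2 u) := by
  have h := hc.Tk_abs_le (Tpow_L2 hc hu n) x
  exact le_trans h (sqrt_N2_Tpow_le hc hu n)

lemma Tpow_measurable {c : ℝ → ℝ → ℝ} (hc : Ker c) {u : ℝ → ℝ} (hu : L2 u) (n : ℕ) :
    Measurable (Tpow c n u) := (Tpow_L2 hc hu n).1

lemma Tpow_Tk_comm {c : ℝ → ℝ → ℝ} (n : ℕ) (u : ℝ → ℝ) :
    Tpow c n (Tk c u) = Tpow c (n+1) u := by
  induction n with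
  | zero => rfl
  | succ n ih => show Tk c (Tpow c n (Tk c u)) = _; rw [ih]; rfl

lemma Tpow_add {c : ℝ → ℝ → ℝ} (hc : Ker c) {u v : ℝ → ℝ} (hu : L2 u) (hv : L2 v) (n : ℕ) :
    Tpow c n (fun x => u x + v x) = fun x => Tpow c n u x + Tpow c n v x := by
  induction n with
  | zero => rfl
  | succ n ih =>
    show Tk c (Tpow c n fun x => u x + v x) = _
    rw [ih]
    funext x
    exact Tk_add hc (Tpow_L2 hc hu n) (Tpow_L2 hc hv n) x

lemma Tpow_smul {c : ℝ → ℝ → ℝ} (a : ℝ) (u : ℝ → ℝ) (n : ℕ) :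
    Tpow c n (fun x => a * u x) = fun x => a * Tpow c n u x := by
  induction n with
  | zero => rfl
  | succ n ih =>
    show Tk c (Tpow c n fun x => a * u x) = _
    rw [ih]
    funext x
    exact Tk_smul c a (Tpow c n u) x

/-- resolvent series -/
def Rop (c : ℝ → ℝ → ℝ) (β : ℝ) (u : ℝ → ℝ) : ℝ → ℝ :=
  fun x => ∑' n, (β^(n+1))⁻¹ * Tpow c n u x

section Resolvent

variable {c : ℝ → ℝ → ℝ} {β : ℝ} (hc : Ker c) (hβ : gOpNorm c < β)

lemma beta_pos (hc : Ker c) (hβ : gOpNorm c < β) : 0 < β :=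
  lt_of_le_of_lt (gOpNorm_nonneg hc.1 hc.bdUI) hβ

lemma ratio_lt_one (hc : Ker c) (hβ : gOpNorm c < β) : gOpNorm c / β < 1 :=
  (div_lt_one (beta_pos hc hβ)).mpr hβ

lemma ratio_nonneg (hc : Ker c) (hβ : gOpNorm c < β) : 0 ≤ gOpNorm c / β :=
  div_nonneg (gOpNorm_nonneg hc.1 hc.bdUI) (le_of_lt (beta_pos hc hβ))

include hc hβ in
lemma summable_Rop {u : ℝ → ℝ} (hu : L2 u) (x : ℝ) :
    Summable (fun n => (β^(n+1))⁻¹ * Tpow c n u x) := by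
  have hβ0 := beta_pos hc hβ
  have hβne : β ≠ 0 := ne_of_gt hβ0
  have hgeo : Summable (fun n : ℕ => (Real.sqrt (N2 u) / β^2) * (gOpNorm c / β)^n) :=
    ((summable_geometric_of_lt_one (ratio_nonneg hc hβ) (ratio_lt_one hc hβ))).mul_left _
  refine Summable.of_abs ?_
  refine (summable_nat_add_iff 1).mp ?_
  refine Summable.of_nonneg_of_le (fun n => abs_nonneg _) (fun n => ?_) hgeo
  show |(β^(n+1+1))⁻¹ * Tpow c (n+1) u x| ≤ _
  rw [abs_mul, abs_of_nonneg (show (0:ℝ) ≤ (β^(n+1+1))⁻¹ by positivity)]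
  have h2 := Tpow_abs_le hc hu n x
  have h3 : (β^(n+1+1))⁻¹ * |Tpow c (n+1) u x|
      ≤ (β^(n+1+1))⁻¹ * (gOpNorm c ^ n * Real.sqrt (N2 u)) :=
    mul_le_mul_of_nonneg_left h2 (by positivity)
  refine le_trans h3 (le_of_eq ?_)
  rw [div_pow]
  field_simp
  ring

include hc hβ in
lemma summable_Rop_tail {u : ℝ → ℝ} (hu : L2 u) (x : ℝ) :
    Summable (fun n => (β^(n+2))⁻¹ * Tpow c (n+1) u x) :=
  (summable_nat_add_iff 1).mpr (summable_Rop hc hβ hu x)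

include hc hβ in
lemma Rop_bound_pointwise {u : ℝ → ℝ} (hu : L2 u) (n : ℕ) (x : ℝ) :
    |(β^(n+2))⁻¹ * Tpow c (n+1) u x|
      ≤ (Real.sqrt (N2 u) / β^2) * (gOpNorm c / β)^n := by
  have hβ0 := beta_pos hc hβ
  have hβne : β ≠ 0 := ne_of_gt hβ0
  rw [abs_mul, abs_of_nonneg (show (0:ℝ) ≤ (β^(n+2))⁻¹ by positivity)]
  have h2 := Tpow_abs_le hc hu n x
  have h3 : (β^(n+2))⁻¹ * |Tpow c (n+1) u x|
      ≤ (β^(n+2))⁻¹ * (gOpNorm c ^ n * Real.sqrt (N2 u)) :=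
    mul_le_mul_of_nonneg_left h2 (by positivity)
  refine le_trans h3 (le_of_eq ?_)
  rw [div_pow]
  field_simp
  ring

include hc hβ in
lemma Rop_abs_tail_le {u : ℝ → ℝ} (hu : L2 u) (x : ℝ) :
    |∑' n, (β^(n+2))⁻¹ * Tpow c (n+1) u x|
      ≤ (Real.sqrt (N2 u) / β^2) * (1 - gOpNorm c / β)⁻¹ := by
  have hgeo : Summable (fun n : ℕ => (Real.sqrt (N2 u) / β^2) * (gOpNorm c / β)^n) :=
    ((summable_geometric_of_lt_one (ratio_nonneg hc hβ) (ratio_lt_one hc hβ))).mul_left _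
  have hbnd := fun n => Rop_bound_pointwise hc hβ hu n x
  have habs : Summable (fun n => |(β^(n+2))⁻¹ * Tpow c (n+1) u x|) :=
    Summable.of_nonneg_of_le (fun n => abs_nonneg _) hbnd hgeo
  have hnorm : Summable (fun n => ‖(β^(n+2))⁻¹ * Tpow c (n+1) u x‖) := by
    simpa only [Real.norm_eq_abs] using habs
  have h1 : ‖∑' n, (β^(n+2))⁻¹ * Tpow c (n+1) u x‖
      ≤ ∑' n, ‖(β^(n+2))⁻¹ * Tpow c (n+1) u x‖ := norm_tsum_le_tsum_norm hnorm
  simp only [Real.norm_eq_abs] at h1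
  have h2 : (∑' n, |(β^(n+2))⁻¹ * Tpow c (n+1) u x|)
      ≤ ∑' n, (Real.sqrt (N2 u) / β^2) * (gOpNorm c / β)^n :=
    Summable.tsum_le_tsum hbnd habs hgeo
  have h3 : (∑' (n:ℕ), (Real.sqrt (N2 u) / β^2) * (gOpNorm c / β)^n)
      = (Real.sqrt (N2 u) / β^2) * (1 - gOpNorm c / β)⁻¹ := by
    rw [tsum_mul_left, tsum_geometric_of_lt_one (ratio_nonneg hc hβ) (ratio_lt_one hc hβ)]
  linarith

end Resolvent

/-! ### Stage 6: the resolvent operator -/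

def RopTail (c : ℝ → ℝ → ℝ) (β : ℝ) (u : ℝ → ℝ) : ℝ → ℝ :=
  fun x => ∑' n, (β^(n+2))⁻¹ * Tpow c (n+1) u x

section Resolvent2

variable {c : ℝ → ℝ → ℝ} {β : ℝ} (hc : Ker c) (hβ : gOpNorm c < β)

lemma integral_tsum_swap {f : ℕ → ℝ → ℝ} (hmeas : ∀ n, Measurable (f n))
    {C r : ℝ} (hr0 : 0 ≤ r) (hr1 : r < 1) (hC0 : 0 ≤ C)
    (hint : ∀ n, IntegrableOn (f n) UI)
    (hbnd : ∀ n, (∫ x in UI, |f n x|) ≤ C * r^n) :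
    ∫ x in UI, (∑' n, f n x) = ∑' n, ∫ x in UI, f n x := by
  refine integral_tsum (fun n => (hmeas n).aestronglyMeasurable) ?_
  have h1 : ∀ n, ∫⁻ x in UI, ‖f n x‖ₑ ≤ ENNReal.ofReal (C * r^n) := by
    intro n
    rw [← ofReal_integral_norm_eq_lintegral_enorm (hint n)]
    refine ENNReal.ofReal_le_ofReal ?_
    calc (∫ x in UI, ‖f n x‖) = ∫ x in UI, |f n x| := by simp only [Real.norm_eq_abs]
      _ ≤ C * r^n := hbnd n
  have h2 : (∑' n, ∫⁻ x in UI, ‖f n x‖ₑ) ≤ ∑' n, ENNReal.ofReal (C * r^n) :=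
    ENNReal.tsum_le_tsum h1
  have h3 : (∑' n, ENNReal.ofReal (C * r^n)) = ENNReal.ofReal (∑' n, C * r^n) :=
    (ENNReal.ofReal_tsum_of_nonneg (fun n => mul_nonneg hC0 (pow_nonneg hr0 n))
      ((summable_geometric_of_lt_one hr0 hr1).mul_left C)).symm
  refine ne_top_of_le_ne_top ?_ h2
  rw [h3]
  exact ENNReal.ofReal_ne_top

include hc hβ in
lemma Rop_measurable {u : ℝ → ℝ} (hu : L2 u) : Measurable (Rop c β u) := by
  have hmeasN : ∀ N : ℕ, Measurable (fun x => ∑ n ∈ Finset.range N,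
      (β^(n+1))⁻¹ * Tpow c n u x) := by
    intro N
    exact Finset.measurable_sum _ (fun n _ => ((Tpow_L2 hc hu n).1.const_mul _))
  refine measurable_of_tendsto_metrizable hmeasN ?_
  rw [tendsto_pi_nhds]
  intro x
  exact (summable_Rop hc hβ hu x).hasSum.tendsto_sum_nat

include hc hβ in
lemma RopTail_measurable {u : ℝ → ℝ} (hu : L2 u) : Measurable (RopTail c β u) := by
  have hmeasN : ∀ N : ℕ, Measurable (fun x => ∑ n ∈ Finset.range N,
      (β^(n+2))⁻¹ * Tpow c (n+1) u x) := by
    intro N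
    exact Finset.measurable_sum _ (fun n _ => ((Tpow_L2 hc hu (n+1)).1.const_mul _))
  refine measurable_of_tendsto_metrizable hmeasN ?_
  rw [tendsto_pi_nhds]
  intro x
  exact (summable_Rop_tail hc hβ hu x).hasSum.tendsto_sum_nat

include hc hβ in
lemma Rop_split {u : ℝ → ℝ} (hu : L2 u) :
    Rop c β u = fun x => β⁻¹ * u x + RopTail c β u x := by
  funext x
  unfold Rop RopTail
  rw [Summable.tsum_eq_zero_add (summable_Rop hc hβ hu x)]
  have h0 : (β^(0+1))⁻¹ * Tpow c 0 u x = β⁻¹ * u x := by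
    show (β^1)⁻¹ * u x = β⁻¹ * u x
    rw [pow_one]
  rw [h0]

include hc hβ in
lemma one_sub_ratio_pos : 0 < 1 - gOpNorm c / β :=
  sub_pos.mpr (ratio_lt_one hc hβ)

include hc hβ in
lemma RopTail_L2 {u : ℝ → ℝ} (hu : L2 u) : L2 (RopTail c β u) := by
  have hβ0 := beta_pos hc hβ
  set K := (Real.sqrt (N2 u) / β^2) * (1 - gOpNorm c / β)⁻¹ with hK
  have hK0 : 0 ≤ K := by
    have := one_sub_ratio_pos hc hβ
    have h2 : (0:ℝ) ≤ Real.sqrt (N2 u) / β^2 := by positivity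
    positivity
  refine ⟨RopTail_measurable hc hβ hu, ?_⟩
  refine Integrable.mono' (g := fun _ => K^2) (integrable_const _)
    ((RopTail_measurable hc hβ hu).pow_const 2).aestronglyMeasurable ?_
  filter_upwards with x
  rw [Real.norm_eq_abs, abs_pow]
  have h := Rop_abs_tail_le hc hβ hu x
  have : |RopTail c β u x| ≤ K := h
  nlinarith [abs_nonneg (RopTail c β u x)]

include hc hβ in
lemma Rop_L2 {u : ℝ → ℝ} (hu : L2 u) : L2 (Rop c β u) := by
  rw [Rop_split hc hβ hu]
  exact (hu.smul β⁻¹).add (RopTail_L2 hc hβ hu)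

lemma sqrt_N2_add_le {u v : ℝ → ℝ} (hu : L2 u) (hv : L2 v) :
    Real.sqrt (N2 (fun x => u x + v x)) ≤ Real.sqrt (N2 u) + Real.sqrt (N2 v) := by
  have hexp : N2 (fun x => u x + v x)
      = N2 u + 2*(∫ x in UI, u x * v x) + N2 v := by
    unfold N2
    have e : (∫ x in UI, (u x + v x)^2)
        = ∫ x in UI, ((u x ^2 + 2*(u x * v x)) + v x ^ 2) :=
      integral_congr_ae (.of_forall fun x => by ring)
    have hA : IntegrableOn (fun x => u x ^ 2 + 2*(u x * v x)) UI :=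
      hu.2.add ((hu.mul_integrableOn hv).const_mul 2)
    rw [e, integral_add hA hv.2, integral_add hu.2 ((hu.mul_integrableOn hv).const_mul 2),
      integral_const_mul]
  have hcs : (∫ x in UI, u x * v x) ≤ Real.sqrt (N2 u) * Real.sqrt (N2 v) := by
    have h1 := cauchy_schwarz hu hv
    have h2 : (∫ x in UI, u x * v x) ≤ |∫ x in UI, u x * v x| := le_abs_self _
    have h3 : |∫ x in UI, u x * v x| = Real.sqrt ((∫ x in UI, u x * v x)^2) :=
      (Real.sqrt_sq_eq_abs _).symm
    rw [h3] at h2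
    refine le_trans h2 ?_
    rw [← Real.sqrt_mul_self (Real.sqrt_nonneg (N2 u)), Real.sqrt_mul_self (Real.sqrt_nonneg (N2 u))]
    calc Real.sqrt ((∫ x in UI, u x * v x)^2) ≤ Real.sqrt (N2 u * N2 v) := Real.sqrt_le_sqrt h1
      _ = Real.sqrt (N2 u) * Real.sqrt (N2 v) := Real.sqrt_mul (N2_nonneg u) _
  have hle : N2 (fun x => u x + v x) ≤ (Real.sqrt (N2 u) + Real.sqrt (N2 v))^2 := by
    rw [hexp]
    have e1 : Real.sqrt (N2 u)^2 = N2 u := Real.sq_sqrt (N2_nonneg u)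
    have e2 : Real.sqrt (N2 v)^2 = N2 v := Real.sq_sqrt (N2_nonneg v)
    nlinarith [hcs]
  calc Real.sqrt (N2 (fun x => u x + v x))
      ≤ Real.sqrt ((Real.sqrt (N2 u) + Real.sqrt (N2 v))^2) := Real.sqrt_le_sqrt hle
    _ = Real.sqrt (N2 u) + Real.sqrt (N2 v) := by
        rw [Real.sqrt_sq (by positivity)]

include hc hβ in
lemma sqrt_N2_RopTail_le {u : ℝ → ℝ} (hu : L2 u) :
    Real.sqrt (N2 (RopTail c β u))
      ≤ (Real.sqrt (N2 u) / β^2) * (1 - gOpNorm c / β)⁻¹ := by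
  have hβ0 := beta_pos hc hβ
  set K := (Real.sqrt (N2 u) / β^2) * (1 - gOpNorm c / β)⁻¹ with hK
  have hK0 : 0 ≤ K := by
    have := one_sub_ratio_pos hc hβ
    positivity
  have hN2 : N2 (RopTail c β u) ≤ K^2 := by
    unfold N2
    have hint : IntegrableOn (fun x => RopTail c β u x ^ 2) UI := (RopTail_L2 hc hβ hu).2
    have hconst : IntegrableOn (fun _ : ℝ => K^2) UI :=
      integrableOn_const (by rw [volUI]; exact ENNReal.one_ne_top)
    have := setIntegral_mono_on hint hconst measUI (fun x _ => by
      have h := Rop_abs_tail_le hc hβ hu x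
      have : |RopTail c β u x| ≤ K := h
      nlinarith [abs_nonneg (RopTail c β u x), sq_abs (RopTail c β u x)])
    refine le_trans this (le_of_eq ?_)
    rw [setIntegral_const, measureReal_def, volUI]
    simp
  calc Real.sqrt (N2 (RopTail c β u)) ≤ Real.sqrt (K^2) := Real.sqrt_le_sqrt hN2
    _ = K := Real.sqrt_sq hK0

include hc hβ in
lemma sqrt_N2_Rop_le {u : ℝ → ℝ} (hu : L2 u) :
    Real.sqrt (N2 (Rop c β u))
      ≤ (β⁻¹ + (β^2)⁻¹ * (1 - gOpNorm c / β)⁻¹) * Real.sqrt (N2 u) := by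
  have hβ0 := beta_pos hc hβ
  rw [Rop_split hc hβ hu]
  have h1 := sqrt_N2_add_le (hu.smul β⁻¹) (RopTail_L2 hc hβ hu)
  have h2 : Real.sqrt (N2 (fun x => β⁻¹ * u x)) = β⁻¹ * Real.sqrt (N2 u) := by
    rw [N2_smul, Real.sqrt_mul (by positivity), Real.sqrt_sq (by positivity)]
  have h3 := sqrt_N2_RopTail_le hc hβ hu
  calc Real.sqrt (N2 fun x => β⁻¹ * u x + RopTail c β u x)
      ≤ Real.sqrt (N2 (fun x => β⁻¹ * u x)) + Real.sqrt (N2 (RopTail c β u)) := h1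
    _ ≤ β⁻¹ * Real.sqrt (N2 u) + (Real.sqrt (N2 u) / β^2) * (1 - gOpNorm c / β)⁻¹ := by
        rw [h2]; linarith
    _ = (β⁻¹ + (β^2)⁻¹ * (1 - gOpNorm c / β)⁻¹) * Real.sqrt (N2 u) := by ring

include hc hβ in
lemma Rop_add {u v : ℝ → ℝ} (hu : L2 u) (hv : L2 v) (x : ℝ) :
    Rop c β (fun y => u y + v y) x = Rop c β u x + Rop c β v x := by
  unfold Rop
  have e : (fun n => (β^(n+1))⁻¹ * Tpow c n (fun y => u y + v y) x)
      = fun n => (β^(n+1))⁻¹ * Tpow c n u x + (β^(n+1))⁻¹ * Tpow c n v x := by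
    funext n
    rw [Tpow_add hc hu hv n]
    ring
  rw [e, Summable.tsum_add (summable_Rop hc hβ hu x) (summable_Rop hc hβ hv x)]

include hc hβ in
lemma Rop_smul (a : ℝ) {u : ℝ → ℝ} (hu : L2 u) (x : ℝ) :
    Rop c β (fun y => a * u y) x = a * Rop c β u x := by
  unfold Rop
  have e : (fun n => (β^(n+1))⁻¹ * Tpow c n (fun y => a * u y) x)
      = fun n => a * ((β^(n+1))⁻¹ * Tpow c n u x) := by
    funext n
    rw [Tpow_smul a u n]
    ring
  rw [e, tsum_mul_left]

include hc hβ in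
lemma Rop_sub {u v : ℝ → ℝ} (hu : L2 u) (hv : L2 v) (x : ℝ) :
    Rop c β (fun y => u y - v y) x = Rop c β u x - Rop c β v x := by
  have e : (fun y => u y - v y) = (fun y => u y + (-1) * v y) := by funext y; ring
  rw [e, Rop_add hc hβ hu (hv.smul (-1)) x, Rop_smul hc hβ (-1) hv x]
  ring

include hc hβ in
lemma Tk_Rop {u : ℝ → ℝ} (hu : L2 u) (x : ℝ) :
    Tk c (Rop c β u) x = ∑' n, (β^(n+1))⁻¹ * Tpow c (n+1) u x := by
  have hβ0 := beta_pos hc hβ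
  have hβne : β ≠ 0 := ne_of_gt hβ0
  unfold Tk
  have e1 : ∀ y, c x y * Rop c β u y = ∑' n, c x y * ((β^(n+1))⁻¹ * Tpow c n u y) := by
    intro y
    rw [tsum_mul_left]
    rfl
  rw [integral_congr_ae (.of_forall e1)]
  have hswap : (∫ y in UI, ∑' n, c x y * ((β^(n+1))⁻¹ * Tpow c n u y))
      = ∑' n, ∫ y in UI, c x y * ((β^(n+1))⁻¹ * Tpow c n u y) := by
    refine integral_tsum_swap (f := fun n y => c x y * ((β^(n+1))⁻¹ * Tpow c n u y))
      (fun n => (hc.meas_left x).mul (((Tpow_L2 hc hu n).1.const_mul _)))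
      (ratio_nonneg hc hβ) (ratio_lt_one hc hβ)
      (C := Real.sqrt (N2 u) / β) (by positivity)
      (fun n => hc.integrableOn_mul ((Tpow_L2 hc hu n).smul _) x) ?_
    intro n
    have hb1 : ∀ y, |c x y * ((β^(n+1))⁻¹ * Tpow c n u y)|
        ≤ (β^(n+1))⁻¹ * |Tpow c n u y| := by
      intro y
      rw [abs_mul, abs_mul, abs_of_nonneg (show (0:ℝ) ≤ (β^(n+1))⁻¹ by positivity)]
      calc |c x y| * ((β^(n+1))⁻¹ * |Tpow c n u y|)
          ≤ 1 * ((β^(n+1))⁻¹ * |Tpow c n u y|) :=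
            mul_le_mul_of_nonneg_right (hc.2.2 x y) (by positivity)
        _ = (β^(n+1))⁻¹ * |Tpow c n u y| := one_mul _
    have hint1 : IntegrableOn (fun y => |c x y * ((β^(n+1))⁻¹ * Tpow c n u y)|) UI :=
      (hc.integrableOn_mul ((Tpow_L2 hc hu n).smul _) x).abs
    have hint2 : IntegrableOn (fun y => (β^(n+1))⁻¹ * |Tpow c n u y|) UI :=
      (Tpow_L2 hc hu n).integrableOn.abs.const_mul _
    have hmono := integral_mono_ae hint1 hint2 (.of_forall hb1)
    have hend : (∫ y in UI, (β^(n+1))⁻¹ * |Tpow c n u y|)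
        ≤ Real.sqrt (N2 u) / β * (gOpNorm c / β)^n := by
      rw [integral_const_mul]
      have := integral_abs_Tpow_le hc hu n
      have h4 : (β^(n+1))⁻¹ * (∫ y in UI, |Tpow c n u y|)
          ≤ (β^(n+1))⁻¹ * (gOpNorm c ^ n * Real.sqrt (N2 u)) :=
        mul_le_mul_of_nonneg_left this (by positivity)
      refine le_trans h4 (le_of_eq ?_)
      rw [div_pow]
      field_simp
      ring
    exact le_trans hmono hend
  rw [hswap]
  refine tsum_congr fun n => ?_
  have : (∫ y in UI, c x y * ((β^(n+1))⁻¹ * Tpow c n u y))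
      = (β^(n+1))⁻¹ * ∫ y in UI, c x y * Tpow c n u y := by
    rw [← integral_const_mul]
    exact integral_congr_ae (.of_forall fun y => by ring)
  rw [this]
  rfl

include hc hβ in
lemma Rop_Tk {u : ℝ → ℝ} (hu : L2 u) (x : ℝ) :
    Rop c β (Tk c u) x = ∑' n, (β^(n+1))⁻¹ * Tpow c (n+1) u x := by
  unfold Rop
  exact tsum_congr fun n => by rw [Tpow_Tk_comm]

include hc hβ in
lemma Rop_resolvent {u : ℝ → ℝ} (hu : L2 u) (x : ℝ) :
    β * Rop c β u x - Tk c (Rop c β u) x = u x := by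
  have hβ0 := beta_pos hc hβ
  have hβne : β ≠ 0 := ne_of_gt hβ0
  have e1 : β * Rop c β u x = ∑' n, (β^n)⁻¹ * Tpow c n u x := by
    unfold Rop
    rw [← tsum_mul_left]
    refine tsum_congr fun n => ?_
    rw [pow_succ]
    field_simp
  have hsum2 : Summable (fun n => (β^n)⁻¹ * Tpow c n u x) := by
    have := (summable_Rop hc hβ hu x).mul_left β
    refine this.congr fun n => ?_
    rw [pow_succ]
    field_simp
  rw [e1, Summable.tsum_eq_zero_add hsum2, Tk_Rop hc hβ hu x]
  have e2 : (β^(0:ℕ))⁻¹ * Tpow c 0 u x = u x := by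
    norm_num
    rfl
  rw [e2]
  ring

end Resolvent2

/-! ### Stage 7: kernel powers and inner products -/

lemma integral_abs_mul_le {a b : ℝ → ℝ} (ha : L2 a) (hb : L2 b) :
    (∫ x in UI, |a x * b x|) ≤ Real.sqrt (N2 a) * Real.sqrt (N2 b) := by
  have e : (∫ x in UI, |a x * b x|) = ∫ x in UI, |a x| * |b x| :=
    integral_congr_ae (.of_forall fun x => abs_mul _ _)
  have hcs := cauchy_schwarz ha.abs hb.abs
  have hNa : N2 (fun x => |a x|) = N2 a :=
    integral_congr_ae (.of_forall fun x => sq_abs (a x))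
  have hNb : N2 (fun x => |b x|) = N2 b :=
    integral_congr_ae (.of_forall fun x => sq_abs (b x))
  rw [hNa, hNb] at hcs
  have h0 : 0 ≤ ∫ x in UI, |a x| * |b x| :=
    integral_nonneg fun x => mul_nonneg (abs_nonneg _) (abs_nonneg _)
  rw [e]
  calc (∫ x in UI, |a x| * |b x|)
      = Real.sqrt ((∫ x in UI, |a x| * |b x|)^2) := (Real.sqrt_sq h0).symm
    _ ≤ Real.sqrt (N2 a * N2 b) := Real.sqrt_le_sqrt hcs
    _ = Real.sqrt (N2 a) * Real.sqrt (N2 b) := Real.sqrt_mul (N2_nonneg a) _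

lemma abs_integral_mul_Tpow_le {c : ℝ → ℝ → ℝ} (hc : Ker c) {a b : ℝ → ℝ}
    (ha : L2 a) (hb : L2 b) (n : ℕ) :
    |∫ x in UI, a x * Tpow c n b x|
      ≤ gOpNorm c ^ n * (Real.sqrt (N2 a) * Real.sqrt (N2 b)) := by
  have h1 : |∫ x in UI, a x * Tpow c n b x| ≤ ∫ x in UI, |a x * Tpow c n b x| := by
    have := norm_integral_le_integral_norm (μ := volume.restrict UI)
      (fun x => a x * Tpow c n b x)
    simpa only [Real.norm_eq_abs] using this
  have h2 := integral_abs_mul_le ha (Tpow_L2 hc hb n)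
  have h3 := sqrt_N2_Tpow_le hc hb n
  have h4 : Real.sqrt (N2 a) * Real.sqrt (N2 (Tpow c n b))
      ≤ Real.sqrt (N2 a) * (gOpNorm c ^ n * Real.sqrt (N2 b)) :=
    mul_le_mul_of_nonneg_left h3 (Real.sqrt_nonneg _)
  calc |∫ x in UI, a x * Tpow c n b x| ≤ _ := h1
    _ ≤ Real.sqrt (N2 a) * Real.sqrt (N2 (Tpow c n b)) := h2
    _ ≤ Real.sqrt (N2 a) * (gOpNorm c ^ n * Real.sqrt (N2 b)) := h4
    _ = gOpNorm c ^ n * (Real.sqrt (N2 a) * Real.sqrt (N2 b)) := by ring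

section Resolvent3

variable {c : ℝ → ℝ → ℝ} {β : ℝ} (hc : Ker c) (hβ : gOpNorm c < β)

include hc hβ in
lemma Rop_applied_resolvent {u : ℝ → ℝ} (hu : L2 u) (x : ℝ) :
    Rop c β (fun y => β * u y - Tk c u y) x = u x := by
  have h1 := Rop_sub hc hβ (hu.smul β) (hc.Tk_L2 hu) x
  rw [h1, Rop_smul hc hβ β hu x, Rop_Tk hc hβ hu x, ← Tk_Rop hc hβ hu x]
  exact Rop_resolvent hc hβ hu x

include hc hβ in
lemma integral_mul_Rop {v w : ℝ → ℝ} (hv : L2 v) (hw : L2 w) :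
    (∫ x in UI, v x * Rop c β w x)
      = ∑' n, (β^(n+1))⁻¹ * ∫ x in UI, v x * Tpow c n w x := by
  have hβ0 := beta_pos hc hβ
  have hβne : β ≠ 0 := ne_of_gt hβ0
  have e1 : ∀ x, v x * Rop c β w x = ∑' n, v x * ((β^(n+1))⁻¹ * Tpow c n w x) := by
    intro x
    rw [tsum_mul_left]
    rfl
  rw [integral_congr_ae (.of_forall e1)]
  have hswap : (∫ x in UI, ∑' n, v x * ((β^(n+1))⁻¹ * Tpow c n w x))
      = ∑' n, ∫ x in UI, v x * ((β^(n+1))⁻¹ * Tpow c n w x) := by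
    refine integral_tsum_swap (f := fun n x => v x * ((β^(n+1))⁻¹ * Tpow c n w x))
      (fun n => hv.1.mul ((Tpow_L2 hc hw n).1.const_mul _))
      (ratio_nonneg hc hβ) (ratio_lt_one hc hβ)
      (C := Real.sqrt (N2 v) * Real.sqrt (N2 w) / β) (by positivity)
      (fun n => hv.mul_integrableOn ((Tpow_L2 hc hw n).smul _)) ?_
    intro n
    have e2 : (∫ x in UI, |v x * ((β^(n+1))⁻¹ * Tpow c n w x)|)
        = (β^(n+1))⁻¹ * ∫ x in UI, |v x * Tpow c n w x| := by
      rw [← integral_const_mul]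
      refine integral_congr_ae (.of_forall fun x => ?_)
      show |v x * ((β^(n+1))⁻¹ * Tpow c n w x)| = (β^(n+1))⁻¹ * |v x * Tpow c n w x|
      rw [abs_mul, abs_mul, abs_of_nonneg (show (0:ℝ) ≤ (β^(n+1))⁻¹ by positivity), abs_mul]
      ring
    rw [e2]
    have h2 := integral_abs_mul_le hv (Tpow_L2 hc hw n)
    have h3 := sqrt_N2_Tpow_le hc hw n
    have h5 : (∫ x in UI, |v x * Tpow c n w x|)
        ≤ Real.sqrt (N2 v) * (gOpNorm c ^ n * Real.sqrt (N2 w)) :=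
      le_trans h2 (mul_le_mul_of_nonneg_left h3 (Real.sqrt_nonneg _))
    have h6 : (β^(n+1))⁻¹ * (∫ x in UI, |v x * Tpow c n w x|)
        ≤ (β^(n+1))⁻¹ * (Real.sqrt (N2 v) * (gOpNorm c ^ n * Real.sqrt (N2 w))) :=
      mul_le_mul_of_nonneg_left h5 (by positivity)
    refine le_trans h6 (le_of_eq ?_)
    rw [div_pow]
    field_simp
    ring
  rw [hswap]
  refine tsum_congr fun n => ?_
  rw [← integral_const_mul]
  exact integral_congr_ae (.of_forall fun x => by ring)

include hc hβ in
lemma tsum_inner_Rop {v w : ℝ → ℝ} (hv : L2 v) (hw : L2 w) :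
    (∑' n, (β^n)⁻¹ * ∫ x in UI, v x * Tpow c n w x)
      = β * ∫ x in UI, v x * Rop c β w x := by
  have hβ0 := beta_pos hc hβ
  have hβne : β ≠ 0 := ne_of_gt hβ0
  rw [integral_mul_Rop hc hβ hv hw, ← tsum_mul_left]
  refine tsum_congr fun n => ?_
  rw [pow_succ]
  field_simp

end Resolvent3

/-! ### kpow vs Tpow -/

lemma kpow_measurable {c : ℝ → ℝ → ℝ} (hc : Ker c) :
    ∀ n, Measurable (Function.uncurry (kpow c n))
  | 0 => hc.1
  | n+1 => by
    have hF : Measurable (fun q : (ℝ × ℝ) × ℝ => kpow c n q.1.1 q.2 * c q.2 q.1.2) := by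
      have h1 : Measurable (fun q : (ℝ × ℝ) × ℝ => kpow c n q.1.1 q.2) :=
        (kpow_measurable hc n).comp ((measurable_fst.comp measurable_fst).prodMk measurable_snd)
      have h2 : Measurable (fun q : (ℝ × ℝ) × ℝ => c q.2 q.1.2) :=
        hc.1.comp (measurable_snd.prodMk (measurable_snd.comp measurable_fst))
      exact h1.mul h2
    exact hF.stronglyMeasurable.integral_prod_right'.measurable

lemma kpow_meas_left {c : ℝ → ℝ → ℝ} (hc : Ker c) (n : ℕ) (x : ℝ) :
    Measurable (fun y => kpow c n x y) :=
  (kpow_measurable hc n).comp measurable_prodMk_left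

lemma kpow_meas_right {c : ℝ → ℝ → ℝ} (hc : Ker c) (n : ℕ) (y : ℝ) :
    Measurable (fun x => kpow c n x y) :=
  (kpow_measurable hc n).comp (measurable_id.prodMk measurable_const)

lemma kpow_bdd {c : ℝ → ℝ → ℝ} (hc : Ker c) : ∀ n x y, |kpow c n x y| ≤ 1
  | 0, x, y => hc.2.2 x y
  | n+1, x, y => by
    show |∫ z in UI, kpow c n x z * c z y| ≤ 1
    have hm : Measurable (fun z => kpow c n x z * c z y) :=
      (kpow_meas_left hc n x).mul (hc.1.comp (measurable_id.prodMk measurable_const))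
    have hb : ∀ z, |kpow c n x z * c z y| ≤ 1 := by
      intro z
      rw [abs_mul]
      exact mul_le_one₀ (kpow_bdd hc n x z) (abs_nonneg _) (hc.2.2 z y)
    have hint : IntegrableOn (fun z => kpow c n x z * c z y) UI := by
      refine Integrable.mono' (g := fun _ => (1:ℝ)) (integrable_const _)
        hm.aestronglyMeasurable ?_
      filter_upwards with z
      rw [Real.norm_eq_abs]
      exact hb z
    have h1 : |∫ z in UI, kpow c n x z * c z y| ≤ ∫ z in UI, |kpow c n x z * c z y| := by
      have := norm_integral_le_integral_norm (μ := volume.restrict UI)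
        (fun z => kpow c n x z * c z y)
      simpa only [Real.norm_eq_abs] using this
    have h2 : (∫ z in UI, |kpow c n x z * c z y|) ≤ ∫ z in UI, (1:ℝ) :=
      integral_mono_ae hint.abs (integrableOn_const (by
        rw [volUI]; exact ENNReal.one_ne_top)) (.of_forall hb)
    have h3 : (∫ z in UI, (1:ℝ)) = 1 := by
      rw [setIntegral_const, measureReal_def, volUI]
      simp
    linarith

lemma kpow_apply_integral {c : ℝ → ℝ → ℝ} (hc : Ker c) :
    ∀ (n : ℕ) {b : ℝ → ℝ}, L2 b → ∀ x,
      (∫ y in UI, kpow c n x y * b y) = Tpow c (n+1) b x := by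
  intro n
  induction n with
  | zero =>
    intro b hb x
    rfl
  | succ n ih =>
    intro b hb x
    have hTkb : L2 (Tk c b) := hc.Tk_L2 hb
    have e1 : ∀ y, kpow c (n+1) x y * b y
        = ∫ z in UI, kpow c n x z * c z y * b y := by
      intro y
      show (∫ z in UI, kpow c n x z * c z y) * b y = _
      rw [← integral_mul_const]
    have hprod : Integrable (Function.uncurry fun y z => kpow c n x z * c z y * b y)
        ((volume.restrict UI).prod (volume.restrict UI)) := by
      have hm : Measurable (Function.uncurry fun y z => kpow c n x z * c z y * b y) := by
        have h1 : Measurable (fun p : ℝ × ℝ => kpow c n x p.2) :=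
          (kpow_meas_left hc n x).comp measurable_snd
        have h2 : Measurable (fun p : ℝ × ℝ => c p.2 p.1) :=
          hc.1.comp (measurable_snd.prodMk measurable_fst)
        have h3 : Measurable (fun p : ℝ × ℝ => b p.1) := hb.1.comp measurable_fst
        exact (h1.mul h2).mul h3
      refine Integrable.mono' (g := fun p => |b p.1| * 1) ?_ hm.aestronglyMeasurable ?_
      · exact hb.integrableOn.abs.mul_prod (integrableOn_const (by
          rw [volUI]; exact ENNReal.one_ne_top))
      · filter_upwards with p
        rw [Real.norm_eq_abs, mul_one]
        show |kpow c n x p.2 * c p.2 p.1 * b p.1| ≤ |b p.1|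
        rw [abs_mul, abs_mul]
        have hk := kpow_bdd hc n x p.2
        have hcb := hc.2.2 p.2 p.1
        calc |kpow c n x p.2| * |c p.2 p.1| * |b p.1|
            ≤ 1 * 1 * |b p.1| := by
              refine mul_le_mul (mul_le_mul hk hcb (abs_nonneg _) (by norm_num))
                (le_refl _) (abs_nonneg _) (by norm_num)
          _ = |b p.1| := by ring
    calc (∫ y in UI, kpow c (n+1) x y * b y)
        = ∫ y in UI, ∫ z in UI, kpow c n x z * c z y * b y :=
          integral_congr_ae (.of_forall e1)
      _ = ∫ z in UI, ∫ y in UI, kpow c n x z * c z y * b y :=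
          integral_integral_swap hprod
      _ = ∫ z in UI, kpow c n x z * Tk c b z := by
          refine integral_congr_ae (.of_forall fun z => ?_)
          show (∫ y in UI, kpow c n x z * c z y * b y) = kpow c n x z * ∫ y in UI, c z y * b y
          rw [← integral_const_mul]
          exact integral_congr_ae (.of_forall fun y => by ring)
      _ = Tpow c (n+1) (Tk c b) x := ih hTkb x
      _ = Tpow c (n+2) b x := by rw [Tpow_Tk_comm]

lemma double_integral_kpow {c : ℝ → ℝ → ℝ} (hc : Ker c) {a b : ℝ → ℝ}
    (ha : L2 a) (hb : L2 b) (n : ℕ) :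
    (∫ x in UI, ∫ y in UI, a x * kpow c n x y * b y)
      = ∫ x in UI, a x * Tpow c (n+1) b x := by
  refine integral_congr_ae (.of_forall fun x => ?_)
  show (∫ y in UI, a x * kpow c n x y * b y) = a x * Tpow c (n+1) b x
  rw [← kpow_apply_integral hc n hb x, ← integral_const_mul]
  exact integral_congr_ae (.of_forall fun y => by ring)

/-! ### Stage 8: truncation, finite sums, positivity -/

def trunc (c : ℝ → ℝ → ℝ) : ℝ → ℝ → ℝ :=
  fun x y => Set.indicator (UI ×ˢ UI) (Function.uncurry c) (x, y)

lemma trunc_eq {c : ℝ → ℝ → ℝ} {x y : ℝ} (hx : x ∈ UI) (hy : y ∈ UI) :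
    trunc c x y = c x y := by
  unfold trunc
  rw [Set.indicator_of_mem (Set.mk_mem_prod hx hy)]
  rfl

lemma trunc_eq_zero {c : ℝ → ℝ → ℝ} {x y : ℝ} (h : ¬(x ∈ UI ∧ y ∈ UI)) :
    trunc c x y = 0 := by
  unfold trunc
  refine Set.indicator_of_notMem ?_ _
  intro hmem
  exact h ⟨hmem.1, hmem.2⟩

lemma trunc_Ker {c : ℝ → ℝ → ℝ} (hmeas : Measurable (Function.uncurry c))
    (hsym : ∀ x y, c x y = c y x) (hbd : ∀ x ∈ UI, ∀ y ∈ UI, |c x y| ≤ 1) :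
    Ker (trunc c) := by
  refine ⟨?_, ?_, ?_⟩
  · have : Function.uncurry (trunc c)
        = Set.indicator (UI ×ˢ UI) (Function.uncurry c) := by
      funext p
      show Set.indicator (UI ×ˢ UI) (Function.uncurry c) (p.1, p.2) = _
      rfl
    rw [this]
    exact hmeas.indicator (measUI.prod measUI)
  · intro x y
    by_cases hx : x ∈ UI ∧ y ∈ UI
    · rw [trunc_eq hx.1 hx.2, trunc_eq hx.2 hx.1, hsym]
    · rw [trunc_eq_zero hx, trunc_eq_zero (by tauto)]
  · intro x y
    by_cases hx : x ∈ UI ∧ y ∈ UI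
    · rw [trunc_eq hx.1 hx.2]
      exact hbd x hx.1 y hx.2
    · rw [trunc_eq_zero hx]
      norm_num

lemma trunc_kpow_congr {c : ℝ → ℝ → ℝ} :
    ∀ n, ∀ x ∈ UI, ∀ y ∈ UI, kpow c n x y = kpow (trunc c) n x y
  | 0, x, hx, y, hy => (trunc_eq hx hy).symm
  | n+1, x, hx, y, hy => by
    show (∫ z in UI, kpow c n x z * c z y) = ∫ z in UI, kpow (trunc c) n x z * trunc c z y
    refine setIntegral_congr_fun measUI (fun z hz => ?_)
    rw [trunc_kpow_congr n x hx z hz, trunc_eq hz hy]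

lemma L2.congr_shape {u : ℝ → ℝ} (hu : L2 u) {v : ℝ → ℝ} (h : ∀ x, u x = v x) : L2 v := by
  have : u = v := funext h
  rwa [this] at hu

lemma L2.finset_sum {ι : Type*} (s : Finset ι) (f : ι → ℝ → ℝ)
    (hf : ∀ i ∈ s, L2 (f i)) : L2 (fun x => ∑ i ∈ s, f i x) := by
  classical
  induction s using Finset.cons_induction with
  | empty => simpa using L2.zero
  | cons i s his ih =>
    have h1 : L2 (fun x => f i x + ∑ j ∈ s, f j x) :=
      (hf i (Finset.mem_cons_self i s)).add (ih fun j hj => hf j (Finset.mem_cons_of_mem hj))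
    refine L2.congr_shape h1 ?_
    intro x
    rw [Finset.sum_cons]

lemma sqrt_N2_finset_sum_le {ι : Type*} (s : Finset ι) (f : ι → ℝ → ℝ)
    (hf : ∀ i ∈ s, L2 (f i)) :
    Real.sqrt (N2 (fun x => ∑ i ∈ s, f i x)) ≤ ∑ i ∈ s, Real.sqrt (N2 (f i)) := by
  classical
  induction s using Finset.cons_induction with
  | empty =>
    simp only [Finset.sum_empty]
    have : N2 (fun _ : ℝ => (0:ℝ)) = 0 := by
      unfold N2; simp
    rw [this, Real.sqrt_zero]
  | cons i s his ih =>
    have hfi := hf i (Finset.mem_cons_self i s)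
    have hfs : ∀ j ∈ s, L2 (f j) := fun j hj => hf j (Finset.mem_cons_of_mem hj)
    have hsum : L2 (fun x => ∑ j ∈ s, f j x) := L2.finset_sum s f hfs
    have e : (fun x => ∑ j ∈ Finset.cons i s his, f j x)
        = fun x => f i x + ∑ j ∈ s, f j x := by
      funext x; rw [Finset.sum_cons]
    rw [e, Finset.sum_cons]
    calc Real.sqrt (N2 fun x => f i x + ∑ j ∈ s, f j x)
        ≤ Real.sqrt (N2 (f i)) + Real.sqrt (N2 (fun x => ∑ j ∈ s, f j x)) :=
          sqrt_N2_add_le hfi hsum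
      _ ≤ Real.sqrt (N2 (f i)) + ∑ j ∈ s, Real.sqrt (N2 (f j)) := by
          linarith [ih hfs]

lemma Tpow_zero (c : ℝ → ℝ → ℝ) : ∀ n, Tpow c n (fun _ => (0:ℝ)) = fun _ => (0:ℝ)
  | 0 => rfl
  | n+1 => by
    show Tk c (Tpow c n fun _ => (0:ℝ)) = _
    rw [Tpow_zero c n]
    funext x
    unfold Tk
    simp

lemma Rop_zero (c : ℝ → ℝ → ℝ) (β : ℝ) (x : ℝ) : Rop c β (fun _ => (0:ℝ)) x = 0 := by
  unfold Rop
  rw [show (fun n => (β^(n+1))⁻¹ * Tpow c n (fun _ => (0:ℝ)) x) = fun _ => (0:ℝ) by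
    funext n; rw [Tpow_zero c n]; simp]
  exact tsum_zero

section Resolvent4

variable {c : ℝ → ℝ → ℝ} {β : ℝ} (hc : Ker c) (hβ : gOpNorm c < β)

include hc hβ in
lemma Rop_finset_sum {ι : Type*} (s : Finset ι) (f : ι → ℝ → ℝ)
    (hf : ∀ i, L2 (f i)) (x : ℝ) :
    Rop c β (fun y => ∑ i ∈ s, f i y) x = ∑ i ∈ s, Rop c β (f i) x := by
  classical
  induction s using Finset.cons_induction with
  | empty =>
    rw [show (fun y => ∑ i ∈ (∅ : Finset ι), f i y) = fun _ => (0:ℝ) by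
      funext y; simp]
    rw [Finset.sum_empty]
    exact Rop_zero c β x
  | cons i s his ih =>
    have e : (fun y => ∑ j ∈ Finset.cons i s his, f j y)
        = fun y => f i y + ∑ j ∈ s, f j y := by
      funext y; rw [Finset.sum_cons]
    rw [e, Rop_add hc hβ (hf i) (L2.finset_sum s f fun j _ => hf j) x, Finset.sum_cons, ih]

end Resolvent4

/-- positivity comparison for nonnegative kernels -/
lemma B_abs_ge {c : ℝ → ℝ → ℝ} (hc : Ker c) (hpos : ∀ x y, 0 ≤ c x y)
    {u : ℝ → ℝ} (hu : L2 u) :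
    |B c u u| ≤ B c (fun x => |u x|) (fun x => |u x|) := by
  have hau : L2 (fun x => |u x|) := hu.abs
  have claim0 : ∀ x, |Tk c u x| ≤ Tk c (fun y => |u y|) x := by
    intro x
    have h1 : |Tk c u x| ≤ ∫ y in UI, |c x y * u y| := by
      have := norm_integral_le_integral_norm (μ := volume.restrict UI) (fun y => c x y * u y)
      simpa only [Real.norm_eq_abs, Tk] using this
    have h2 : (∫ y in UI, |c x y * u y|) = Tk c (fun y => |u y|) x := by
      unfold Tk
      refine integral_congr_ae (.of_forall fun y => ?_)
      show |c x y * u y| = c x y * |u y|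
      rw [abs_mul, abs_of_nonneg (hpos x y)]
    rw [h2] at h1
    exact h1
  have claim1 : ∀ x, |u x * Tk c u x| ≤ |u x| * Tk c (fun y => |u y|) x := by
    intro x
    rw [abs_mul]
    exact mul_le_mul_of_nonneg_left (claim0 x) (abs_nonneg _)
  have h1 : |B c u u| ≤ ∫ x in UI, |u x * Tk c u x| := by
    have := norm_integral_le_integral_norm (μ := volume.restrict UI)
      (fun x => u x * Tk c u x)
    simpa only [Real.norm_eq_abs, B] using this
  have h2 : (∫ x in UI, |u x * Tk c u x|)
      ≤ ∫ x in UI, |u x| * Tk c (fun y => |u y|) x :=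
    integral_mono_ae (hu.mul_integrableOn (hc.Tk_L2 hu)).abs
      (hau.mul_integrableOn (hc.Tk_L2 hau)) (.of_forall claim1)
  exact le_trans h1 (le_trans h2 (le_refl _))

end FRX
end

noncomputable section
namespace FRX

def Mmat {k : ℕ} (θ : Fin k → ℝ) (ν' : Fin k → ℝ → ℝ) (c : ℝ → ℝ → ℝ) (β : ℝ) :
    Matrix (Fin k) (Fin k) ℝ :=
  fun i j => Real.sqrt (θ i) * Real.sqrt (θ j) *
    (β * ∫ x in UI, ν' i x * Rop c β (ν' j) x)

section Main

variable {k : ℕ} {θ : Fin k → ℝ} {ν' : Fin k → ℝ → ℝ} {c : ℝ → ℝ → ℝ} {β : ℝ}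
variable (hkc : Ker c) (hβ : gOpNorm c < β)
variable (hθ : ∀ i, 0 ≤ θ i) (hL2 : ∀ i, L2 (ν' i))
variable (hortho' : ∀ i j, (∫ x in UI, ν' i x * ν' j x) = if i = j then (1:ℝ) else 0)

include hL2 hortho' in
lemma inner_expansion (a : Fin k → ℝ) (i : Fin k) :
    (∫ x in UI, ν' i x * ∑ j, a j * ν' j x) = a i := by
  have e : ∀ x, ν' i x * ∑ j, a j * ν' j x = ∑ j, a j * (ν' i x * ν' j x) := by
    intro x
    rw [Finset.mul_sum]
    exact Finset.sum_congr rfl fun j _ => by ring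
  rw [integral_congr_ae (.of_forall e), integral_finset_sum _ (fun j _ =>
    ((hL2 i).mul_integrableOn (hL2 j)).const_mul (a j))]
  have : ∀ j ∈ Finset.univ, a j * (∫ x in UI, ν' i x * ν' j x)
      = if j = i then a i else 0 := by
    intro j _
    rw [hortho' i j]
    by_cases hij : i = j
    · subst hij; simp
    · rw [if_neg (Ne.symm hij), if_neg hij]  -- careful
      ring
  calc (∑ j, ∫ x in UI, a j * (ν' i x * ν' j x))
      = ∑ j, a j * ∫ x in UI, ν' i x * ν' j x := by
        refine Finset.sum_congr rfl fun j _ => integral_const_mul _ _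
    _ = ∑ j, if j = i then a i else 0 := Finset.sum_congr rfl this
    _ = a i := by simp

include hL2 hortho' in
lemma N2_w_expansion (a : Fin k → ℝ) :
    N2 (fun x => ∑ j, a j * ν' j x) = ∑ j, (a j)^2 := by
  have hw : L2 (fun x => ∑ j, a j * ν' j x) :=
    L2.finset_sum _ _ (fun j _ => (hL2 j).smul (a j))
  have e0 : N2 (fun x => ∑ j, a j * ν' j x)
      = ∫ x in UI, (∑ j, a j * ν' j x) * (∑ j, a j * ν' j x) := by
    unfold N2
    refine integral_congr_ae (.of_forall fun x => ?_)
    show (∑ j, a j * ν' j x)^2 = (∑ j, a j * ν' j x) * (∑ j, a j * ν' j x)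
    ring
  rw [e0]
  have e1 : ∀ x, (∑ j, a j * ν' j x) * (∑ j, a j * ν' j x)
      = ∑ j, a j * (ν' j x * (∑ l, a l * ν' l x)) := by
    intro x
    rw [Finset.sum_mul]
    exact Finset.sum_congr rfl fun j _ => by ring
  rw [integral_congr_ae (.of_forall e1),
    integral_finset_sum _ (fun j _ => ((hL2 j).mul_integrableOn hw).const_mul (a j))]
  refine Finset.sum_congr rfl fun j _ => ?_
  rw [integral_const_mul, inner_expansion hL2 hortho' a j]
  ring

end Main
section Main2

variable {k : ℕ} {θ : Fin k → ℝ} {ν' : Fin k → ℝ → ℝ} {c ch : ℝ → ℝ → ℝ} {β : ℝ}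
variable (hkc : Ker c) (hkch : Ker ch) (hβ : gOpNorm c < β)
variable (hθ : ∀ i, 0 ≤ θ i) (hL2 : ∀ i, L2 (ν' i))
variable (hortho' : ∀ i j, (∫ x in UI, ν' i x * ν' j x) = if i = j then (1:ℝ) else 0)
variable (hdec : ∀ x y, ch x y = c x y + ∑ i, θ i * ν' i x * ν' i y)

include hkc hβ hL2 in
lemma Mmat_mulVec (d : Fin k → ℝ) (i : Fin k) :
    (Mmat θ ν' c β).mulVec d i
      = β * Real.sqrt (θ i) *
        ∫ x in UI, ν' i x * Rop c β (fun y => ∑ j, (Real.sqrt (θ j) * d j) * ν' j y) x := by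
  have hRw : ∀ x, Rop c β (fun y => ∑ j, (Real.sqrt (θ j) * d j) * ν' j y) x
      = ∑ j, (Real.sqrt (θ j) * d j) * Rop c β (ν' j) x := by
    intro x
    rw [Rop_finset_sum hkc hβ Finset.univ (fun j y => (Real.sqrt (θ j) * d j) * ν' j y)
      (fun j => (hL2 j).smul _) x]
    exact Finset.sum_congr rfl fun j _ => Rop_smul hkc hβ _ (hL2 j) x
  have e1 : (∫ x in UI, ν' i x * Rop c β (fun y => ∑ j, (Real.sqrt (θ j) * d j) * ν' j y) x)
      = ∑ j, (Real.sqrt (θ j) * d j) * ∫ x in UI, ν' i x * Rop c β (ν' j) x := by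
    have e2 : ∀ x, ν' i x * Rop c β (fun y => ∑ j, (Real.sqrt (θ j) * d j) * ν' j y) x
        = ∑ j, (Real.sqrt (θ j) * d j) * (ν' i x * Rop c β (ν' j) x) := by
      intro x
      rw [hRw x, Finset.mul_sum]
      exact Finset.sum_congr rfl fun j _ => by ring
    rw [integral_congr_ae (.of_forall e2), integral_finset_sum _ (fun j _ =>
      ((hL2 i).mul_integrableOn (Rop_L2 hkc hβ (hL2 j))).const_mul _)]
    exact Finset.sum_congr rfl fun j _ => integral_const_mul _ _
  unfold Matrix.mulVec Mmat dotProduct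
  rw [e1, Finset.mul_sum]
  refine Finset.sum_congr rfl fun j _ => ?_
  ring

include hkc hkch hβ hθ hL2 hortho' hdec in
lemma eig_le (hβval : gOpNorm ch = β) (t : ℝ) (d : Fin k → ℝ) (hd : d ≠ 0)
    (heig : (Mmat θ ν' c β).mulVec d = t • d) : t ≤ β := by
  have hβ0 := beta_pos hkc hβ
  have hδ0 : 0 ≤ gOpNorm c := gOpNorm_nonneg hkc.1 hkc.bdUI
  set w : ℝ → ℝ := fun y => ∑ j, (Real.sqrt (θ j) * d j) * ν' j y with hw
  have hwL2 : L2 w := L2.finset_sum _ _ (fun j _ => (hL2 j).smul _)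
  have hN2w : N2 w = ∑ j, (Real.sqrt (θ j) * d j)^2 :=
    N2_w_expansion hL2 hortho' _
  have heig' : ∀ i, β * Real.sqrt (θ i) * (∫ x in UI, ν' i x * Rop c β w x) = t * d i := by
    intro i
    have := congrFun heig i
    rw [Mmat_mulVec hkc hβ hL2 d i] at this
    exact this
  rcases eq_or_lt_of_le (N2_nonneg w) with h0 | hpos
  · -- w = 0 in L²; coefficients vanish; t = 0
    have hz : ∀ j, Real.sqrt (θ j) * d j = 0 := by
      intro j
      have hsum : (∑ j, (Real.sqrt (θ j) * d j)^2) = 0 := by rw [← hN2w, ← h0]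
      have := Finset.sum_eq_zero_iff_of_nonneg (fun j _ => sq_nonneg (Real.sqrt (θ j) * d j))
        |>.mp hsum j (Finset.mem_univ j)
      exact pow_eq_zero_iff (n := 2) (by norm_num) |>.mp this
    have hwzero : w = fun _ => (0:ℝ) := by
      funext y
      rw [hw]
      exact Finset.sum_eq_zero fun j _ => by rw [hz j]; ring
    have ht0 : ∀ i, t * d i = 0 := by
      intro i
      rw [← heig' i, hwzero]
      have : ∀ x, Rop c β (fun _ => (0:ℝ)) x = 0 := Rop_zero c β
      have e : (∫ x in UI, ν' i x * Rop c β (fun _ => (0:ℝ)) x) = 0 := by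
        refine integral_eq_zero_of_ae (.of_forall fun x => ?_)
        show ν' i x * Rop c β (fun _ => (0:ℝ)) x = 0
        rw [this x]; ring
      rw [e]; ring
    have : t = 0 := by
      by_contra hne
      refine hd (funext fun i => ?_)
      have := ht0 i
      have : d i = 0 := by
        rcases mul_eq_zero.mp this with h | h
        · exact absurd h hne
        · exact h
      simpa using this
    linarith
  · -- main case
    set u : ℝ → ℝ := Rop c β w with hu
    have huL2 : L2 u := Rop_L2 hkc hβ hwL2
    have key1 : ∀ x, Tk c u x = β * u x - w x := by
      intro x
      have := Rop_resolvent hkc hβ hwL2 x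
      rw [← hu] at this
      linarith
    have hcoef : ∀ i, θ i * (∫ x in UI, ν' i x * u x) = Real.sqrt (θ i) * (t * d i) / β := by
      intro i
      have h1 := heig' i
      have h2 : Real.sqrt (θ i) * (∫ x in UI, ν' i x * u x) = t * d i / β := by
        have hβne : β ≠ 0 := ne_of_gt hβ0
        field_simp
        linear_combination h1
      calc θ i * (∫ x in UI, ν' i x * u x)
          = Real.sqrt (θ i) * (Real.sqrt (θ i) * (∫ x in UI, ν' i x * u x)) := by
            rw [← mul_assoc, Real.mul_self_sqrt (hθ i)]
        _ = Real.sqrt (θ i) * (t * d i / β) := by rw [h2]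
        _ = Real.sqrt (θ i) * (t * d i) / β := by ring
    -- T_ch u = β u - w + (t/β) w
    have hTdec : ∀ x, Tk ch u x = Tk c u x + ∑ i, θ i * (∫ y in UI, ν' i y * u y) * ν' i x := by
      intro x
      unfold Tk
      have e1 : ∀ y, ch x y * u y
          = c x y * u y + ∑ i, (θ i * ν' i x) * (ν' i y * u y) := by
        intro y
        rw [hdec x y]
        rw [add_mul, Finset.sum_mul]
        congr 1
        exact Finset.sum_congr rfl fun i _ => by ring
      rw [integral_congr_ae (.of_forall e1),
        integral_add (hkc.integrableOn_mul huL2 x) (by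
          exact integrable_finset_sum _ (fun i _ =>
            (((hL2 i).mul_integrableOn huL2).const_mul _)))]
      congr 1
      rw [integral_finset_sum _ (fun i _ => ((hL2 i).mul_integrableOn huL2).const_mul _)]
      exact Finset.sum_congr rfl fun i _ => by rw [integral_const_mul]; ring
    have key2 : ∀ x, Tk ch u x = β * u x - w x + (t/β) * w x := by
      intro x
      rw [hTdec x, key1 x]
      have e3 : ∑ i, θ i * (∫ y in UI, ν' i y * u y) * ν' i x = (t/β) * w x := by
        rw [hw, Finset.mul_sum]
        refine Finset.sum_congr rfl fun i _ => ?_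
        rw [hcoef i]
        ring
      rw [e3]
    have hNu_pos : 0 < N2 u := by
      rcases eq_or_lt_of_le (N2_nonneg u) with h0 | hlt
      swap
      · exact hlt
      exfalso
      have hu0 := N2_eq_zero_ae huL2 h0.symm
      have hTk0 : ∀ x, Tk c u x = 0 := Tk_zero_of_ae hu0
      have hwae : ∀ᵐ x ∂(volume.restrict UI), w x = 0 := by
        filter_upwards [hu0] with x hx
        have := key1 x
        rw [hTk0 x, hx] at this
        linarith
      have hNw0 : N2 w = 0 := by
        unfold N2
        refine integral_eq_zero_of_ae ?_
        filter_upwards [hwae] with x hx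
        simp [hx]
      linarith
    have hBc : B c u u ≤ gOpNorm c * N2 u :=
      le_trans (le_abs_self _) (abs_B_self_le hkc huL2)
    have hintuw : IntegrableOn (fun x => u x * w x) UI := huL2.mul_integrableOn hwL2
    have hintuT : IntegrableOn (fun x => u x * Tk c u x) UI :=
      huL2.mul_integrableOn (hkc.Tk_L2 huL2)
    have huw_eq : (∫ x in UI, u x * w x) = β * N2 u - B c u u := by
      have e4 : ∀ x, u x * w x = β * u x^2 - u x * Tk c u x := by
        intro x
        have hwx : w x = β * u x - Tk c u x := by linarith [key1 x]
        rw [hwx]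
        ring
      rw [integral_congr_ae (.of_forall e4),
        integral_sub (huL2.2.const_mul β) hintuT, integral_const_mul]
      rfl
    have huw : (β - gOpNorm c) * N2 u ≤ ∫ x in UI, u x * w x := by
      rw [huw_eq]
      nlinarith [hBc]
    have hq_eq : B ch u u = β * N2 u + (t/β - 1) * ∫ x in UI, u x * w x := by
      have e5 : ∀ x, u x * Tk ch u x = β * u x^2 + (t/β - 1) * (u x * w x) := by
        intro x
        rw [key2 x]
        ring
      unfold B
      rw [integral_congr_ae (.of_forall e5),
        integral_add (huL2.2.const_mul β) (hintuw.const_mul _), integral_const_mul,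
        integral_const_mul]
      rfl
    have hqle : B ch u u ≤ β * N2 u := by
      have := le_trans (le_abs_self _) (abs_B_self_le hkch huL2)
      rw [hβval] at this
      exact this
    have h7 : (t/β - 1) * (∫ x in UI, u x * w x) ≤ 0 := by linarith [hq_eq, hqle]
    have h6 : 0 < ∫ x in UI, u x * w x :=
      lt_of_lt_of_le (mul_pos (sub_pos.mpr hβ) hNu_pos) huw
    by_contra hcon
    push_neg at hcon
    have hpos2 : 0 < t/β - 1 := by
      rw [sub_pos, lt_div_iff₀ hβ0]
      linarith
    nlinarith [mul_pos hpos2 h6]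

include hkc hkch hβ hθ hL2 hortho' hdec in
lemma eig_mem (hβval : gOpNorm ch = β) (hpos : ∀ x y, 0 ≤ ch x y) :
    ∃ d : Fin k → ℝ, d ≠ 0 ∧ (Mmat θ ν' c β).mulVec d = β • d := by
  classical
  by_contra hno
  push_neg at hno
  have hβ0 := beta_pos hkc hβ
  have hβne : β ≠ 0 := ne_of_gt hβ0
  have hδ0 : 0 ≤ gOpNorm c := gOpNorm_nonneg hkc.1 hkc.bdUI
  set Gm : Matrix (Fin k) (Fin k) ℝ :=
    Matrix.of (fun i j => ∫ x in UI, ν' i x * Rop c β (ν' j) x) with hGm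
  set D : Matrix (Fin k) (Fin k) ℝ := Matrix.diagonal (fun i => Real.sqrt (θ i)) with hD
  set A : Matrix (Fin k) (Fin k) ℝ := Gm * Matrix.diagonal θ with hA
  have hMdef : Mmat θ ν' c β = β • (D * Gm * D) := by
    ext i j
    have e : (D * Gm * D) i j = Real.sqrt (θ i) * Gm i j * Real.sqrt (θ j) := by
      rw [hD, Matrix.mul_diagonal, Matrix.diagonal_mul]
    rw [Matrix.smul_apply, e]
    show Mmat θ ν' c β i j = β * (Real.sqrt (θ i) * Gm i j * Real.sqrt (θ j))
    unfold Mmat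
    show Real.sqrt (θ i) * Real.sqrt (θ j) *
      (β * ∫ x in UI, ν' i x * Rop c β (ν' j) x) = _
    rw [hGm]
    show Real.sqrt (θ i) * Real.sqrt (θ j) *
      (β * ∫ x in UI, ν' i x * Rop c β (ν' j) x)
      = β * (Real.sqrt (θ i) * (∫ x in UI, ν' i x * Rop c β (ν' j) x) * Real.sqrt (θ j))
    ring
  have hdetM : (β • (1 : Matrix (Fin k) (Fin k) ℝ) - Mmat θ ν' c β).det ≠ 0 := by
    intro hdet
    obtain ⟨v, hv0, hveq⟩ := (Matrix.exists_mulVec_eq_zero_iff).mpr hdet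
    refine hno v hv0 ?_
    have e : (β • (1:Matrix (Fin k) (Fin k) ℝ) - Mmat θ ν' c β).mulVec v
        = β • v - (Mmat θ ν' c β).mulVec v := by
      rw [Matrix.sub_mulVec]
      congr 1
      rw [Matrix.smul_mulVec, Matrix.one_mulVec]
    rw [e] at hveq
    have := sub_eq_zero.mp hveq
    exact this.symm
  have hDD : Matrix.diagonal θ = D * D := by
    have e : θ = fun i => Real.sqrt (θ i) * Real.sqrt (θ i) :=
      funext fun i => (Real.mul_self_sqrt (hθ i)).symm
    rw [hD, Matrix.diagonal_mul_diagonal, ← e]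
  have hdetA : ((1 : Matrix (Fin k) (Fin k) ℝ) - A).det ≠ 0 := by
    have e1 : (1 : Matrix (Fin k) (Fin k) ℝ) - A = 1 + (-(Gm * D)) * D := by
      rw [hA, hDD, neg_mul, ← Matrix.mul_assoc, ← sub_eq_add_neg]
    have e2 : ((1 : Matrix (Fin k) (Fin k) ℝ) + (-(Gm * D)) * D).det
        = ((1 : Matrix (Fin k) (Fin k) ℝ) + D * (-(Gm * D))).det :=
      Matrix.det_one_add_mul_comm _ _
    have e3 : (1 : Matrix (Fin k) (Fin k) ℝ) + D * (-(Gm * D)) = 1 - D * Gm * D := by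
      rw [Matrix.mul_neg, ← sub_eq_add_neg, Matrix.mul_assoc]
    have e4 : (1 : Matrix (Fin k) (Fin k) ℝ) - D * Gm * D
        = β⁻¹ • (β • (1 : Matrix (Fin k) (Fin k) ℝ) - Mmat θ ν' c β) := by
      rw [hMdef, smul_sub, smul_smul, inv_mul_cancel₀ hβne, one_smul, smul_smul,
        inv_mul_cancel₀ hβne, one_smul]
    have e5 : (β⁻¹ • (β • (1 : Matrix (Fin k) (Fin k) ℝ) - Mmat θ ν' c β)).det
        = (β⁻¹)^k * (β • (1 : Matrix (Fin k) (Fin k) ℝ) - Mmat θ ν' c β).det := by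
      rw [Matrix.det_smul]
      congr 2
      simp
    rw [e1, e2, e3, e4, e5]
    exact mul_ne_zero (pow_ne_zero k (inv_ne_zero hβne)) hdetM
  set Bm : Matrix (Fin k) (Fin k) ℝ := (1 - A)⁻¹ with hBmdef
  have hBmA : Bm * (1 - A) = 1 :=
    Matrix.nonsing_inv_mul _ (isUnit_iff_ne_zero.mpr hdetA)
  set CR : ℝ := β⁻¹ + (β^2)⁻¹ * (1 - gOpNorm c / β)⁻¹ with hCR
  have hCR0 : 0 < CR := by
    have h1 := one_sub_ratio_pos hkc hβ
    positivity
  set KB : ℝ := ∑ i, ∑ j, |Bm i j| with hKB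
  have hKB0 : 0 ≤ KB :=
    Finset.sum_nonneg fun i _ => Finset.sum_nonneg fun j _ => abs_nonneg _
  set Θs : ℝ := ∑ i, θ i with hΘ
  have hΘ0 : 0 ≤ Θs := Finset.sum_nonneg fun i _ => hθ i
  set Cf : ℝ := CR * (Θs * KB * CR + 1) with hCf
  have hCf0 : 0 < Cf := by positivity
  -- coercivity claim
  have hclaim : ∀ u : ℝ → ℝ, L2 u →
      Real.sqrt (N2 u) ≤ Cf * Real.sqrt (N2 (fun x => Tk ch u x - β * u x)) := by
    intro u huL2
    set f : ℝ → ℝ := fun x => Tk ch u x - β * u x with hf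
    have hfL2 : L2 f := (hkch.Tk_L2 huL2).sub (huL2.smul β)
    set cv : Fin k → ℝ := fun i => ∫ x in UI, ν' i x * u x with hcv
    set Wu : ℝ → ℝ := fun x => ∑ i, (θ i * cv i) * ν' i x with hWu
    have hWuL2 : L2 Wu := L2.finset_sum _ _ fun i _ => (hL2 i).smul _
    have hTdec : ∀ x, Tk ch u x = Tk c u x + ∑ i, (θ i * cv i) * ν' i x := by
      intro x
      unfold Tk
      have e1 : ∀ y, ch x y * u y
          = c x y * u y + ∑ i, (θ i * ν' i x) * (ν' i y * u y) := by
        intro y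
        rw [hdec x y, add_mul, Finset.sum_mul]
        congr 1
        exact Finset.sum_congr rfl fun i _ => by ring
      rw [integral_congr_ae (.of_forall e1),
        integral_add (hkc.integrableOn_mul huL2 x) (integrable_finset_sum _ (fun i _ =>
          (((hL2 i).mul_integrableOn huL2).const_mul _)))]
      congr 1
      rw [integral_finset_sum _ (fun i _ => ((hL2 i).mul_integrableOn huL2).const_mul _)]
      refine Finset.sum_congr rfl fun i _ => ?_
      rw [integral_const_mul, hcv]
      show θ i * ν' i x * ∫ y in UI, ν' i y * u y = θ i * (∫ x in UI, ν' i x * u x) * ν' i x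
      ring
    have hres : (fun y => β * u y - Tk c u y) = fun y => Wu y - f y := by
      funext y
      rw [hf]
      show β * u y - Tk c u y = Wu y - (Tk ch u y - β * u y)
      rw [hTdec y, hWu]
      ring
    have hueq : ∀ x, u x = Rop c β Wu x - Rop c β f x := by
      intro x
      have h1 := Rop_applied_resolvent hkc hβ huL2 x
      rw [hres] at h1
      rw [← h1]
      exact Rop_sub hkc hβ hWuL2 hfL2 x
    have hRWu : ∀ x, Rop c β Wu x = ∑ i, (θ i * cv i) * Rop c β (ν' i) x := by
      intro x
      rw [hWu]
      rw [Rop_finset_sum hkc hβ Finset.univ (fun i y => (θ i * cv i) * ν' i y)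
        (fun i => (hL2 i).smul _) x]
      exact Finset.sum_congr rfl fun i _ => Rop_smul hkc hβ _ (hL2 i) x
    have hcv_eq : ∀ j, cv j = (A.mulVec cv) j + (- ∫ x in UI, ν' j x * Rop c β f x) := by
      intro j
      have e6 : cv j = ∫ x in UI, (ν' j x * Rop c β Wu x - ν' j x * Rop c β f x) := by
        rw [hcv]
        refine integral_congr_ae (.of_forall fun x => ?_)
        show ν' j x * u x = _
        rw [hueq x]
        ring
      have e7 : (∫ x in UI, (ν' j x * Rop c β Wu x - ν' j x * Rop c β f x))
          = (∫ x in UI, ν' j x * Rop c β Wu x) - ∫ x in UI, ν' j x * Rop c β f x :=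
        integral_sub ((hL2 j).mul_integrableOn (Rop_L2 hkc hβ hWuL2))
          ((hL2 j).mul_integrableOn (Rop_L2 hkc hβ hfL2))
      have e8 : (∫ x in UI, ν' j x * Rop c β Wu x)
          = ∑ i, (θ i * cv i) * Gm j i := by
        have e8a : ∀ x, ν' j x * Rop c β Wu x
            = ∑ i, (θ i * cv i) * (ν' j x * Rop c β (ν' i) x) := by
          intro x
          rw [hRWu x, Finset.mul_sum]
          exact Finset.sum_congr rfl fun i _ => by ring
        rw [integral_congr_ae (.of_forall e8a), integral_finset_sum _ (fun i _ =>
          ((hL2 j).mul_integrableOn (Rop_L2 hkc hβ (hL2 i))).const_mul _)]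
        refine Finset.sum_congr rfl fun i _ => ?_
        rw [integral_const_mul]
        rfl
      have e9 : (A.mulVec cv) j = ∑ i, (θ i * cv i) * Gm j i := by
        rw [hA]
        unfold Matrix.mulVec dotProduct
        refine Finset.sum_congr rfl fun i _ => ?_
        show (Gm * Matrix.diagonal θ) j i * cv i = θ i * cv i * Gm j i
        rw [Matrix.mul_diagonal]
        ring
      rw [e6, e7, e8, ← e9]
      ring
    have hveceq : (1 - A).mulVec cv
        = fun j => - ∫ x in UI, ν' j x * Rop c β f x := by
      funext j
      rw [Matrix.sub_mulVec, Matrix.one_mulVec]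
      show cv j - (A.mulVec cv) j = _
      rw [hcv_eq j]
      ring
    have hcvB : cv = Bm.mulVec (fun j => - ∫ x in UI, ν' j x * Rop c β f x) := by
      have h1 := congrArg (Bm.mulVec) hveceq
      rwa [Matrix.mulVec_mulVec, hBmA, Matrix.one_mulVec] at h1
    have hN2ν : ∀ i, N2 (ν' i) = 1 := by
      intro i
      unfold N2
      have e : (∫ x in UI, ν' i x ^ 2) = ∫ x in UI, ν' i x * ν' i x := by
        refine integral_congr_ae (.of_forall fun x => ?_)
        show ν' i x ^ 2 = ν' i x * ν' i x
        ring
      rw [e, hortho' i i, if_pos rfl]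
    have hEbound : ∀ j, |∫ x in UI, ν' j x * Rop c β f x| ≤ CR * Real.sqrt (N2 f) := by
      intro j
      have h1 : |∫ x in UI, ν' j x * Rop c β f x|
          ≤ ∫ x in UI, |ν' j x * Rop c β f x| := by
        have := norm_integral_le_integral_norm (μ := volume.restrict UI)
          (fun x => ν' j x * Rop c β f x)
        simpa only [Real.norm_eq_abs] using this
      have h2 := integral_abs_mul_le (hL2 j) (Rop_L2 hkc hβ hfL2)
      rw [hN2ν j, Real.sqrt_one, one_mul] at h2
      have h3 := sqrt_N2_Rop_le hkc hβ hfL2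
      calc |∫ x in UI, ν' j x * Rop c β f x| ≤ _ := h1
        _ ≤ Real.sqrt (N2 (Rop c β f)) := h2
        _ ≤ CR * Real.sqrt (N2 f) := h3
    have hcvb : ∀ i, |cv i| ≤ KB * (CR * Real.sqrt (N2 f)) := by
      intro i
      have hE0 : 0 ≤ CR * Real.sqrt (N2 f) := by positivity
      rw [hcvB]
      unfold Matrix.mulVec dotProduct
      calc |∑ j, Bm i j * (- ∫ x in UI, ν' j x * Rop c β f x)|
          ≤ ∑ j, |Bm i j * (- ∫ x in UI, ν' j x * Rop c β f x)| :=
            Finset.abs_sum_le_sum_abs _ _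
        _ ≤ ∑ j, |Bm i j| * (CR * Real.sqrt (N2 f)) := by
            refine Finset.sum_le_sum fun j _ => ?_
            rw [abs_mul, abs_neg]
            exact mul_le_mul_of_nonneg_left (hEbound j) (abs_nonneg _)
        _ = (∑ j, |Bm i j|) * (CR * Real.sqrt (N2 f)) := (Finset.sum_mul _ _ _).symm
        _ ≤ KB * (CR * Real.sqrt (N2 f)) := by
            refine mul_le_mul_of_nonneg_right ?_ hE0
            rw [hKB]
            exact Finset.single_le_sum (f := fun i => ∑ j, |Bm i j|)
              (fun i _ => Finset.sum_nonneg fun j _ => abs_nonneg _) (Finset.mem_univ i)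
    have hsq_Wu : Real.sqrt (N2 Wu) ≤ Θs * (KB * (CR * Real.sqrt (N2 f))) := by
      have h1 := sqrt_N2_finset_sum_le Finset.univ (fun i x => (θ i * cv i) * ν' i x)
        (fun i _ => (hL2 i).smul _)
      have h2 : ∀ i, Real.sqrt (N2 (fun x => (θ i * cv i) * ν' i x)) = |θ i * cv i| := by
        intro i
        rw [N2_smul, Real.sqrt_mul (sq_nonneg _), hN2ν i, Real.sqrt_one, mul_one,
          Real.sqrt_sq_eq_abs]
      calc Real.sqrt (N2 Wu) ≤ ∑ i, Real.sqrt (N2 (fun x => (θ i * cv i) * ν' i x)) := h1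
        _ = ∑ i, |θ i * cv i| := Finset.sum_congr rfl fun i _ => h2 i
        _ ≤ ∑ i, θ i * (KB * (CR * Real.sqrt (N2 f))) := by
            refine Finset.sum_le_sum fun i _ => ?_
            rw [abs_mul, abs_of_nonneg (hθ i)]
            exact mul_le_mul_of_nonneg_left (hcvb i) (hθ i)
        _ = Θs * (KB * (CR * Real.sqrt (N2 f))) := by
            rw [hΘ]
            exact (Finset.sum_mul _ _ _).symm
    have hsplit : Real.sqrt (N2 u)
        ≤ Real.sqrt (N2 (Rop c β Wu)) + Real.sqrt (N2 (Rop c β f)) := by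
      have e : u = fun x => Rop c β Wu x + (-1) * Rop c β f x := by
        funext x
        rw [hueq x]
        ring
      have h1 : N2 u = N2 (fun x => Rop c β Wu x + (-1) * Rop c β f x) := by rw [← e]
      have h2 := sqrt_N2_add_le (Rop_L2 hkc hβ hWuL2) ((Rop_L2 hkc hβ hfL2).smul (-1))
      have h3 : N2 (fun x => (-1) * Rop c β f x) = N2 (Rop c β f) := by
        rw [N2_smul]
        norm_num
      rw [h1]
      rw [h3] at h2
      exact h2
    have h4 := sqrt_N2_Rop_le hkc hβ hWuL2
    have h5 := sqrt_N2_Rop_le hkc hβ hfL2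
    rw [← hCR] at h4 h5
    have h6 : Real.sqrt (N2 (Rop c β Wu)) ≤ CR * (Θs * (KB * (CR * Real.sqrt (N2 f)))) :=
      le_trans h4 (mul_le_mul_of_nonneg_left hsq_Wu (le_of_lt hCR0))
    calc Real.sqrt (N2 u) ≤ _ := hsplit
      _ ≤ CR * (Θs * (KB * (CR * Real.sqrt (N2 f)))) + CR * Real.sqrt (N2 f) := by
          linarith [h6, h5]
      _ = Cf * Real.sqrt (N2 f) := by rw [hCf]; ring
  -- approximate maximizer contradiction
  set η : ℝ := min (β/2) (1/(4*β*Cf^2+1)) with hη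
  have hP0 : 0 < 4*β*Cf^2+1 := by positivity
  have hη0 : 0 < η := lt_min (by linarith) (by positivity)
  have hηβ : η ≤ β/2 := min_le_left _ _
  have hηP : η ≤ 1/(4*β*Cf^2+1) := min_le_right _ _
  have hlt : β - η < gOpNorm ch := by rw [hβval]; linarith
  rw [gOpNorm_def] at hlt
  obtain ⟨t0, ht0mem, ht0gt⟩ := exists_lt_of_lt_csSup ⟨0, zero_mem_gset ch⟩ hlt
  obtain ⟨u0, hu0m, hu0i, hu0N, ht0⟩ := ht0mem
  have hu0L2 : L2 u0 := ⟨hu0m, hu0i⟩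
  set au : ℝ → ℝ := fun x => |u0 x| with hau
  have hauL2 : L2 au := hu0L2.abs
  have hauN : N2 au ≤ 1 := by
    have e : N2 au = N2 u0 := by
      unfold N2
      refine integral_congr_ae (.of_forall fun x => ?_)
      show |u0 x| ^ 2 = u0 x ^ 2
      exact sq_abs _
    exact le_trans (le_of_eq e) hu0N
  have hq : β - η < B ch au au := by
    have h1 : t0 = |B ch u0 u0| := by rw [ht0, iter_eq_B]
    have h2 := B_abs_ge hkch hpos hu0L2
    calc β - η < t0 := ht0gt
      _ = |B ch u0 u0| := h1
      _ ≤ B ch au au := h2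
  set f0 : ℝ → ℝ := fun x => Tk ch au x - β * au x with hf0
  have hf0L2 : L2 f0 := (hkch.Tk_L2 hauL2).sub (hauL2.smul β)
  have hBq : B ch au au ≤ β * N2 au := by
    have := le_trans (le_abs_self _) (abs_B_self_le hkch hauL2)
    rw [hβval] at this
    exact this
  have hN2f0 : N2 f0 ≤ 2*β^2 - 2*β*(B ch au au) := by
    have e : ∀ x, f0 x ^ 2
        = Tk ch au x ^ 2 - (2*β) * (au x * Tk ch au x) + β^2 * au x ^ 2 := by
      intro x
      rw [hf0]
      show (Tk ch au x - β * au x)^2 = _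
      ring
    have hi1 : IntegrableOn (fun x => Tk ch au x ^ 2) UI := (hkch.Tk_L2 hauL2).2
    have hi2 : IntegrableOn (fun x => (2*β) * (au x * Tk ch au x)) UI :=
      (hauL2.mul_integrableOn (hkch.Tk_L2 hauL2)).const_mul _
    have hi12 : IntegrableOn
        (fun x => Tk ch au x ^ 2 - (2*β) * (au x * Tk ch au x)) UI := hi1.sub hi2
    have hi3 : IntegrableOn (fun x => β^2 * au x ^ 2) UI := hauL2.2.const_mul _
    have hsplit2 : N2 f0 = N2 (Tk ch au) - (2*β) * (B ch au au) + β^2 * N2 au := by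
      unfold N2
      rw [integral_congr_ae (.of_forall e), integral_add hi12 hi3, integral_sub hi1 hi2,
        integral_const_mul, integral_const_mul]
      rfl
    have hb1 : N2 (Tk ch au) ≤ β^2 * N2 au := by
      have := N2_Tk_le hkch hauL2
      rw [hβval] at this
      exact this
    have hb2 : β^2 * N2 au ≤ β^2 := by nlinarith [hauN]
    rw [hsplit2]
    nlinarith [hb1, hb2]
  have hcl := hclaim au hauL2
  have hN2au_le : N2 au ≤ Cf^2 * N2 f0 := by
    have h1 : Real.sqrt (N2 au) ^ 2 ≤ (Cf * Real.sqrt (N2 f0)) ^ 2 := by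
      have h0 : 0 ≤ Real.sqrt (N2 au) := Real.sqrt_nonneg _
      nlinarith [hcl]
    rw [Real.sq_sqrt (N2_nonneg au)] at h1
    calc N2 au ≤ (Cf * Real.sqrt (N2 f0))^2 := h1
      _ = Cf^2 * (Real.sqrt (N2 f0))^2 := by ring
      _ = Cf^2 * N2 f0 := by rw [Real.sq_sqrt (N2_nonneg f0)]
  -- final contradiction
  have hchain1 : β - η < β * N2 au := lt_of_lt_of_le hq hBq
  have hchain2 : β * N2 au ≤ β * (Cf^2 * N2 f0) :=
    mul_le_mul_of_nonneg_left hN2au_le (le_of_lt hβ0)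
  have hchain3 : N2 f0 ≤ 2*β*η := by
    have : β - B ch au au < η := by linarith [hq]
    nlinarith [hN2f0, hβ0]
  have hchain4 : β * (Cf^2 * N2 f0) ≤ β * (Cf^2 * (2*β*η)) := by
    have h1 : Cf^2 * N2 f0 ≤ Cf^2 * (2*β*η) :=
      mul_le_mul_of_nonneg_left hchain3 (sq_nonneg _)
    exact mul_le_mul_of_nonneg_left h1 (le_of_lt hβ0)
  have hsmall : β * (Cf^2 * (2*β*η)) < β/2 := by
    have h1 : 2*β^2*Cf^2*η ≤ 2*β^2*Cf^2*(1/(4*β*Cf^2+1)) := by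
      refine mul_le_mul_of_nonneg_left hηP (by positivity)
    have h2 : 2*β^2*Cf^2*(1/(4*β*Cf^2+1)) < β/2 := by
      rw [mul_one_div, div_lt_div_iff₀ hP0 (by norm_num : (0:ℝ) < 2)]
      nlinarith [hβ0, sq_nonneg (β*Cf)]
    calc β * (Cf^2 * (2*β*η)) = 2*β^2*Cf^2*η := by ring
      _ ≤ 2*β^2*Cf^2*(1/(4*β*Cf^2+1)) := h1
      _ < β/2 := h2
  have : β/2 ≤ β - η := by linarith
  linarith [hchain1, hchain2, hchain4, hsmall]

end Main2


section Main3

variable {k : ℕ} {θ : Fin k → ℝ} {ν ν' : Fin k → ℝ → ℝ} {g c : ℝ → ℝ → ℝ} {β : ℝ}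
variable (hkc : Ker c) (hβ : gOpNorm c < β) (hθ : ∀ i, 0 ≤ θ i) (hL2 : ∀ i, L2 (ν' i))
variable (hortho' : ∀ i j, (∫ x in UI, ν' i x * ν' j x) = if i = j then (1:ℝ) else 0)
variable (hνeq : ∀ i, ∀ x ∈ UI, ν i x = ν' i x)
variable (hker_eq : ∀ n, ∀ x ∈ UI, ∀ y ∈ UI, kpow g n x y = kpow c n x y)

include hkc hL2 hνeq hker_eq in
lemma Fmat_entry_eq (n : ℕ) (i j : Fin k) :
    Fmat θ ν g n i j = Real.sqrt (θ i) * Real.sqrt (θ j) *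
      ∫ x in UI, ν' i x * Tpow c n (ν' j) x := by
  cases n with
  | zero =>
    show Real.sqrt (θ i) * Real.sqrt (θ j) * (∫ x in UI, ν i x * ν j x) = _
    congr 1
    refine setIntegral_congr_fun measUI fun x hx => ?_
    rw [hνeq i x hx, hνeq j x hx]
    rfl
  | succ n =>
    show Real.sqrt (θ i) * Real.sqrt (θ j) *
      (∫ x in UI, ∫ y in UI, ν i x * kpow g n x y * ν j y) = _
    congr 1
    rw [← double_integral_kpow hkc (hL2 i) (hL2 j) n]
    refine setIntegral_congr_fun measUI fun x hx => ?_
    refine setIntegral_congr_fun measUI fun y hy => ?_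
    rw [hνeq i x hx, hνeq j y hy, hker_eq n x hx y hy]

include hkc hβ hθ hL2 hortho' hνeq hker_eq in
lemma tsum_Fmat_eq :
    (∑' n : ℕ, ((β^n)⁻¹ : ℝ) • Fmat θ ν g n) = Mmat θ ν' c β := by
  have hβ0 := beta_pos hkc hβ
  have hβne : β ≠ 0 := ne_of_gt hβ0
  have hN2ν : ∀ i, N2 (ν' i) = 1 := by
    intro i
    unfold N2
    have e : (∫ x in UI, ν' i x ^ 2) = ∫ x in UI, ν' i x * ν' i x := by
      refine integral_congr_ae (.of_forall fun x => ?_)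
      show ν' i x ^ 2 = ν' i x * ν' i x
      ring
    rw [e, hortho' i i, if_pos rfl]
  have hsumm : ∀ i j : Fin k, Summable (fun n => (β^n)⁻¹ *
      (Real.sqrt (θ i) * Real.sqrt (θ j) * ∫ x in UI, ν' i x * Tpow c n (ν' j) x)) := by
    intro i j
    have hgeo : Summable (fun n : ℕ =>
        (Real.sqrt (θ i) * Real.sqrt (θ j)) * (gOpNorm c / β)^n) :=
      (summable_geometric_of_lt_one (ratio_nonneg hkc hβ) (ratio_lt_one hkc hβ)).mul_left _
    refine Summable.of_abs (Summable.of_nonneg_of_le (fun n => abs_nonneg _)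
      (fun n => ?_) hgeo)
    have hb := abs_integral_mul_Tpow_le hkc (hL2 i) (hL2 j) n
    rw [hN2ν i, hN2ν j, Real.sqrt_one, one_mul, mul_one] at hb
    have hθij : (0:ℝ) ≤ Real.sqrt (θ i) * Real.sqrt (θ j) := by positivity
    rw [abs_mul, abs_mul, abs_of_nonneg (show (0:ℝ) ≤ (β^n)⁻¹ by positivity),
      abs_of_nonneg hθij]
    calc (β^n)⁻¹ * (Real.sqrt (θ i) * Real.sqrt (θ j)
          * |∫ x in UI, ν' i x * Tpow c n (ν' j) x|)
        ≤ (β^n)⁻¹ * (Real.sqrt (θ i) * Real.sqrt (θ j) * gOpNorm c ^ n) := by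
          refine mul_le_mul_of_nonneg_left ?_ (by positivity)
          exact mul_le_mul_of_nonneg_left hb hθij
      _ = (Real.sqrt (θ i) * Real.sqrt (θ j)) * (gOpNorm c / β)^n := by
          rw [div_pow]
          field_simp
  have hcoord : ∀ (i j : Fin k) (n : ℕ), (((β^n)⁻¹ : ℝ) • Fmat θ ν g n) i j
      = (β^n)⁻¹ * (Real.sqrt (θ i) * Real.sqrt (θ j)
        * ∫ x in UI, ν' i x * Tpow c n (ν' j) x) := by
    intro i j n
    rw [Matrix.smul_apply, Fmat_entry_eq hkc hL2 hνeq hker_eq n i j]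
    rfl
  have hMsum : Summable (fun n => ((β^n)⁻¹ : ℝ) • Fmat θ ν g n) := by
    refine Pi.summable.mpr fun i => ?_
    refine Pi.summable.mpr fun j => ?_
    exact (hsumm i j).congr fun n => (hcoord i j n).symm
  ext i j
  have hrow : Summable (fun n => (((β^n)⁻¹ : ℝ) • Fmat θ ν g n) i) :=
    Pi.summable.mp hMsum i
  have happ1 : (∑' n : ℕ, ((β^n)⁻¹ : ℝ) • Fmat θ ν g n) i j
      = ∑' n : ℕ, (((β^n)⁻¹ : ℝ) • Fmat θ ν g n) i j := by
    exact (congrFun (tsum_apply (x := i) hMsum) j).trans (tsum_apply hrow)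
  rw [happ1, tsum_congr (hcoord i j)]
  have hpull : (∑' n : ℕ, (β^n)⁻¹ * (Real.sqrt (θ i) * Real.sqrt (θ j)
      * ∫ x in UI, ν' i x * Tpow c n (ν' j) x))
      = (Real.sqrt (θ i) * Real.sqrt (θ j)) * ∑' n : ℕ, (β^n)⁻¹
        * ∫ x in UI, ν' i x * Tpow c n (ν' j) x := by
    rw [← tsum_mul_left]
    exact tsum_congr fun n => by ring
  rw [hpull, tsum_inner_Rop hkc hβ (hL2 i) (hL2 j)]
  show _ = Real.sqrt (θ i) * Real.sqrt (θ j)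
    * (β * ∫ x in UI, ν' i x * Rop c β (ν' j) x)
  ring

end Main3

end FRX

end


open FRX

/-- finite-rank expansion of the operator norm. -/
theorem finite_rank_expansion
    (k : ℕ) (hk : 0 < k) (θ : Fin k → ℝ) (ν : Fin k → ℝ → ℝ)
    (hθnonneg : ∀ i, 0 ≤ θ i)
    (hθanti : ∀ i j : Fin k, i ≤ j → θ j ≤ θ i)
    (hθtop : ∀ i : Fin k, 0 < (i : ℕ) → θ i < θ ⟨0, hk⟩)
    (hνmeas : ∀ i, Measurable (ν i))
    (hortho : ∀ i j, (∫ x in UI, ν i x * ν j x) = if i = j then 1 else 0)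
    (hbar : IsGraphon (fun x y => ∑ i, θ i * ν i x * ν i y)) :
    ∃ ε > (0:ℝ), ∀ h : ℝ → ℝ → ℝ, IsGraphon h →
      gOpNorm (fun x y => h x y - ∑ i, θ i * ν i x * ν i y) < min ε (gOpNorm h) →
        gOpNorm h = maxEig (∑' n : ℕ,
          ((gOpNorm h) ^ n)⁻¹ •
            Fmat θ ν (fun x y => h x y - ∑ i, θ i * ν i x * ν i y) n) := by
  classical
  refine ⟨1, one_pos, ?_⟩
  intro h hgr hlt
  set G : ℝ → ℝ → ℝ := fun x y => h x y - ∑ i, θ i * ν i x * ν i y with hG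
  set ν' : Fin k → ℝ → ℝ := fun i => Set.indicator UI (ν i) with hν'
  set c : ℝ → ℝ → ℝ := trunc G with hc
  set ch : ℝ → ℝ → ℝ := trunc h with hch
  have hν'eq : ∀ i, ∀ x ∈ UI, ν i x = ν' i x := by
    intro i x hx
    rw [hν']
    exact (Set.indicator_of_mem hx _).symm
  have hbd_h : ∀ x ∈ UI, ∀ y ∈ UI, |h x y| ≤ 1 := by
    intro x hx y hy
    have h1 := hgr.2.2 x hx y hy
    rw [abs_le]
    exact ⟨by linarith [h1.1], h1.2⟩
  have hbd_hb : ∀ x ∈ UI, ∀ y ∈ UI, (∑ i, θ i * ν i x * ν i y) ∈ Set.Icc (0:ℝ) 1 :=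
    fun x hx y hy => hbar.2.2 x hx y hy
  have hmeasG : Measurable (Function.uncurry G) := by
    rw [hG]
    exact Measurable.sub hgr.1 hbar.1
  have hsymG : ∀ x y, G x y = G y x := by
    intro x y
    rw [hG]
    show h x y - ∑ i, θ i * ν i x * ν i y = h y x - ∑ i, θ i * ν i y * ν i x
    rw [hgr.2.1 x y]
    have e := hbar.2.1 x y
    simp only [] at e
    rw [e]
  have hbdG : ∀ x ∈ UI, ∀ y ∈ UI, |G x y| ≤ 1 := by
    intro x hx y hy
    have h1 := hgr.2.2 x hx y hy
    have h2 := hbd_hb x hx y hy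
    rw [hG]
    show |h x y - ∑ i, θ i * ν i x * ν i y| ≤ 1
    rw [abs_le]
    exact ⟨by linarith [h1.1, h2.2], by linarith [h1.2, h2.1]⟩
  have hkc : FRX.Ker c := trunc_Ker hmeasG hsymG hbdG
  have hkch : FRX.Ker ch := trunc_Ker hgr.1 hgr.2.1 hbd_h
  have hgnh : gOpNorm h = gOpNorm ch :=
    gOpNorm_congr (fun x hx y hy => (trunc_eq hx hy).symm)
  have hgng : gOpNorm G = gOpNorm c :=
    gOpNorm_congr (fun x hx y hy => (trunc_eq hx hy).symm)
  set β := gOpNorm h with hβdef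
  have hβval : gOpNorm ch = β := hgnh.symm
  have hβc : gOpNorm c < β := by
    rw [← hgng]
    exact lt_of_lt_of_le hlt (min_le_right _ _)
  have hL2ν : ∀ i, FRX.L2 (ν' i) := by
    intro i
    refine ⟨(hνmeas i).indicator measUI, ?_⟩
    have hne : (∫ x in UI, ν i x * ν i x) = 1 := by rw [hortho i i, if_pos rfl]
    have hint : IntegrableOn (fun x => ν i x * ν i x) UI := by
      by_contra hni
      rw [integral_undef hni] at hne
      norm_num at hne
    refine hint.congr_fun (fun x hx => ?_) measUI
    show ν i x * ν i x = ν' i x ^ 2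
    rw [← hν'eq i x hx]
    ring
  have hortho'' : ∀ i j, (∫ x in UI, ν' i x * ν' j x) = if i = j then (1:ℝ) else 0 := by
    intro i j
    rw [← hortho i j]
    refine setIntegral_congr_fun measUI fun x hx => ?_
    rw [← hν'eq i x hx, ← hν'eq j x hx]
  have hdec : ∀ x y, ch x y = c x y + ∑ i, θ i * ν' i x * ν' i y := by
    intro x y
    by_cases hxy : x ∈ UI ∧ y ∈ UI
    · rw [hch, hc, trunc_eq hxy.1 hxy.2, trunc_eq hxy.1 hxy.2]
      have e : (∑ i, θ i * ν' i x * ν' i y) = ∑ i, θ i * ν i x * ν i y := by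
        refine Finset.sum_congr rfl fun i _ => ?_
        rw [← hν'eq i x hxy.1, ← hν'eq i y hxy.2]
      rw [e, hG]
      show h x y = (h x y - ∑ i, θ i * ν i x * ν i y) + ∑ i, θ i * ν i x * ν i y
      ring
    · rw [hch, hc, trunc_eq_zero hxy, trunc_eq_zero hxy]
      have e : (∑ i, θ i * ν' i x * ν' i y) = 0 := by
        refine Finset.sum_eq_zero fun i _ => ?_
        rw [hν']
        rcases not_and_or.mp hxy with hx | hy
        · show θ i * Set.indicator UI (ν i) x * Set.indicator UI (ν i) y = 0
          rw [Set.indicator_of_notMem hx]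
          ring
        · show θ i * Set.indicator UI (ν i) x * Set.indicator UI (ν i) y = 0
          rw [Set.indicator_of_notMem hy]
          ring
      rw [e]
      ring
  have hpos : ∀ x y, 0 ≤ ch x y := by
    intro x y
    by_cases hxy : x ∈ UI ∧ y ∈ UI
    · rw [hch, trunc_eq hxy.1 hxy.2]
      exact (hgr.2.2 x hxy.1 y hxy.2).1
    · rw [hch, trunc_eq_zero hxy]
  have hkereq : ∀ n, ∀ x ∈ UI, ∀ y ∈ UI, kpow G n x y = kpow c n x y := by
    intro n x hx y hy
    rw [hc]
    exact trunc_kpow_congr n x hx y hy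
  have htsum := tsum_Fmat_eq (ν := ν) (g := G) hkc hβc hθnonneg hL2ν hortho'' hν'eq hkereq
  show β = maxEig (∑' n : ℕ, ((β^n)⁻¹ : ℝ) • Fmat θ ν G n)
  rw [htsum]
  obtain ⟨d0, hd0, hd0eq⟩ :=
    eig_mem hkc hkch hβc hθnonneg hL2ν hortho'' hdec hβval hpos
  have hub : ∀ t ∈ {t : ℝ | ∃ v : Fin k → ℝ, v ≠ 0 ∧ (Mmat θ ν' c β).mulVec v = t • v},
      t ≤ β := by
    rintro t ⟨v, hv, hveq⟩
    exact eig_le hkc hkch hβc hθnonneg hL2ν hortho'' hdec hβval t v hv hveq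
  have hmem : β ∈ {t : ℝ | ∃ v : Fin k → ℝ, v ≠ 0 ∧ (Mmat θ ν' c β).mulVec v = t • v} :=
    ⟨d0, hd0, hd0eq⟩
  unfold maxEig
  exact (le_antisymm (csSup_le ⟨β, hmem⟩ hub) (le_csSup ⟨β, hub⟩ hmem)).symm
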